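/- For every integer l ≥ 2 and residue 0 ≤ r ≤ l−1, the following identity of formal power series in q holds: ∑_{λ an l-core} q^{∑_{k∈ℤ} N_{kl−r}(λ)} = ∑_{(p_0,…,p_{l−1}) ∈ ℤ^l, ∑_i p_i = 0} q^{(1/2)∑_i p_i² + ∑_{i=l−r}^{l−1} p_i}. In particular all exponents occurring on the right-hand side are nonnegative integers, and for each N ≥ 0 the number of l-cores λ with ∑_{k∈ℤ} N_{kl−r}(λ) = N is finite and equals the number of integer vectors (p_i) with ∑p_i = 0 and (1/2)∑p_i² + ∑_{i=l−r}^{l−1} p_i = N. -/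

import Mathlib

/-- A partition `λ = (λ_1 ≥ λ_2 ≥ ⋯)`: a non-increasing sequence of natural numbers with
finitely many nonzero terms.  Here `parts n` denotes `λ_{n+1}`. -/
structure Partition' where
  parts : ℕ → ℕ
  antitone : ∀ ⦃m n : ℕ⦄, m ≤ n → parts n ≤ parts m
  eventually_zero : ∃ N : ℕ, ∀ n ≥ N, parts n = 0

namespace Partition'

/-- `|λ|`, the number of boxes of the Young diagram of `λ`. -/
noncomputable def size (lam : Partition') : ℕ := ∑ᶠ n, lam.parts n

/-- The Young diagram of `λ`: boxes `(m, n)` (column `m`, row `n`) with `m < λ_{n+1}`. -/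
def cells (lam : Partition') : Set (ℕ × ℕ) := {c | c.1 < lam.parts c.2}

/-- Maya diagram of `λ`: `maya lam k` holds (bead value 1) iff `k ∉ {λ_m − m : m ≥ 1}`. -/
def maya (lam : Partition') (k : ℤ) : Prop :=
  ¬ ∃ m : ℕ, k = (lam.parts m : ℤ) - ((m : ℤ) + 1)

/-- The conjugate partition's `(m+1)`-st part: `λ'_{m+1} = #{rows of length > m}`. -/
noncomputable def conjParts (lam : Partition') (m : ℕ) : ℕ :=
  {j : ℕ | m < lam.parts j}.ncard

/-- Hook length of the box `(m, n)`: `(λ_{n+1} − 1 − m) + (λ'_{m+1} − 1 − n) + 1`. -/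
noncomputable def hookLength (lam : Partition') (m n : ℕ) : ℕ :=
  (lam.parts n - 1 - m) + (lam.conjParts m - 1 - n) + 1

end Partition'

/-- `c` is the charge of the 0/1-sequence `μ`:
`#{k < c : μ k = 1} = #{k ≥ c : μ k = 0}` (both sets finite). -/
def IsCharge (μ : ℤ → Prop) (c : ℤ) : Prop :=
  {k : ℤ | k < c ∧ μ k}.Finite ∧ {k : ℤ | c ≤ k ∧ ¬ μ k}.Finite ∧
    {k : ℤ | k < c ∧ μ k}.ncard = {k : ℤ | c ≤ k ∧ ¬ μ k}.ncard

/-- The `i`-th quotient sequence of the Maya diagram of `λ`: `μ_i(k) = μ_λ(l·k + i)`. -/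
def quotSeq (l : ℕ) (lam : Partition') (i : ℕ) : ℤ → Prop :=
  fun k => lam.maya ((l : ℤ) * k + (i : ℕ))

/-- `Q` is the `l`-quotient of `λ` with quotient charges `p`: for each `i`, `p i` is the
charge of the `i`-th quotient sequence `μ_i` and `μ_{Q i}(k) = μ_i(k + p i)`. -/
def IsQuotientWith (l : ℕ) (lam : Partition') (p : Fin l → ℤ) (Q : Fin l → Partition') : Prop :=
  ∀ i : Fin l, IsCharge (quotSeq l lam i) (p i) ∧
    ∀ k : ℤ, (Q i).maya k ↔ quotSeq l lam i (k + p i)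

/-- Two boxes are adjacent if they share an edge. -/
def Adj (a b : ℕ × ℕ) : Prop :=
  (a.1 = b.1 ∧ (a.2 = b.2 + 1 ∨ b.2 = a.2 + 1)) ∨
    (a.2 = b.2 ∧ (a.1 = b.1 + 1 ∨ b.1 = a.1 + 1))

/-- A set of boxes is connected: any two of its boxes are joined by a path of
edge-adjacent boxes inside the set. -/
def ConnectedIn (H : Set (ℕ × ℕ)) : Prop :=
  ∀ x ∈ H, ∀ y ∈ H,
    Relation.ReflTransGen (fun a b => a ∈ H ∧ b ∈ H ∧ Adj a b) x y

/-- `H` contains a 2×2 square of boxes. -/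
def HasSquare (H : Set (ℕ × ℕ)) : Prop :=
  ∃ m n : ℕ, (m, n) ∈ H ∧ (m + 1, n) ∈ H ∧ (m, n + 1) ∈ H ∧ (m + 1, n + 1) ∈ H

/-- `H` is a rim hook of length `l` of `λ`: a connected set of `l` boxes of `λ`,
containing no 2×2 square, whose removal leaves the Young diagram of a partition. -/
def IsRimHook (l : ℕ) (lam : Partition') (H : Set (ℕ × ℕ)) : Prop :=
  H ⊆ lam.cells ∧ H.Finite ∧ H.ncard = l ∧ ConnectedIn H ∧ ¬ HasSquare H ∧
    ∃ mu : Partition', mu.cells = lam.cells \ H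

/-- `μ` is obtained from `λ` by removing one rim hook of length `l`. -/
def RemoveHook (l : ℕ) (lam mu : Partition') : Prop :=
  ∃ H : Set (ℕ × ℕ), IsRimHook l lam H ∧ mu.cells = lam.cells \ H

/-- `λ` is an `l`-core: it admits no rim hook of length `l`. -/
def IsLCore (l : ℕ) (lam : Partition') : Prop := ¬ ∃ H : Set (ℕ × ℕ), IsRimHook l lam H

/-- `c` is the `l`-core of `λ`: obtained from `λ` by repeatedly removing rim hooks of
length `l` until none remain. -/
def IsCoreOf (l : ℕ) (lam c : Partition') : Prop :=
  Relation.ReflTransGen (RemoveHook l) lam c ∧ IsLCore l c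

/-- Number of boxes `(m,n)` of `λ` with content `m − n ≡ r (mod l)`. -/
noncomputable def contentCount (l : ℕ) (lam : Partition') (r : ℤ) : ℕ :=
  {c : ℕ × ℕ | c ∈ lam.cells ∧ ((c.1 : ℤ) - (c.2 : ℤ)) ≡ r [ZMOD (l : ℤ)]}.ncard

/-- `N_d(λ)`: the number of boxes `(m,n)` of `λ` with content `m − n = d`. -/
noncomputable def diagCount (lam : Partition') (d : ℤ) : ℕ :=
  {c : ℕ × ℕ | c ∈ lam.cells ∧ ((c.1 : ℤ) - (c.2 : ℤ)) = d}.ncard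

/-- `K` is the blended partition of the charges `p` and the `l`-tuple of partitions `R`:
`{p + K_m − m : m ≥ 1} = {l·(R_{i,m} − m + p_i) + i : 0 ≤ i ≤ l−1, m ≥ 1}` in `ℤ`. -/
def IsBlended (l : ℕ) (p : Fin l → ℤ) (R : Fin l → Partition') (K : Partition') : Prop :=
  {k : ℤ | ∃ m : ℕ, k = (∑ i, p i) + (K.parts m : ℤ) - ((m : ℤ) + 1)} =
    {k : ℤ | ∃ i : Fin l, ∃ m : ℕ,
      k = (l : ℤ) * (((R i).parts m : ℤ) - ((m : ℤ) + 1) + p i) + (i : ℕ)}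
section Aux
open Finset

namespace Partition'

noncomputable def beta (P : Partition') (n : ℕ) : ℤ := (P.parts n : ℤ) - n - 1

lemma beta_succ_lt (P : Partition') (n : ℕ) : P.beta (n+1) < P.beta n := by
  have := P.antitone (by omega : n ≤ n+1)
  unfold beta; push_cast; omega

lemma beta_strictAnti (P : Partition') : StrictAnti P.beta :=
  strictAnti_nat_of_succ_lt P.beta_succ_lt

lemma beta_anti (P : Partition') {m n : ℕ} (h : m ≤ n) : P.beta n ≤ P.beta m :=
  P.beta_strictAnti.antitone h

lemma beta_ge (P : Partition') (n : ℕ) : -(n:ℤ) - 1 ≤ P.beta n := by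
  have : (0:ℤ) ≤ (P.parts n : ℤ) := by positivity
  unfold beta; omega

lemma beta_le (P : Partition') (n : ℕ) : P.beta n ≤ P.beta 0 - n := by
  induction n with
  | zero => simp
  | succ k ih => have := P.beta_succ_lt k; push_cast; omega

lemma beta_le' (P : Partition') (m n : ℕ) (h : m ≤ n) :
    P.beta n ≤ P.beta m - ((n:ℤ) - m) := by
  induction n, h using Nat.le_induction with
  | base => simp
  | succ n hmn ih =>
    have := P.beta_succ_lt n
    push_cast
    push_cast at ih
    omega

lemma exists_beta_bound (P : Partition') : ∃ N : ℕ, ∀ n ≥ N, P.beta n = -(n:ℤ) - 1 := by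
  obtain ⟨N, hN⟩ := P.eventually_zero
  exact ⟨N, fun n hn => by unfold beta; rw [hN n hn]; push_cast; ring⟩

lemma parts_eq_beta (P : Partition') (n : ℕ) : P.parts n = (P.beta n + n + 1).toNat := by
  unfold beta; omega

lemma mem_cells_iff (P : Partition') (c : ℕ × ℕ) :
    c ∈ P.cells ↔ (c.1 : ℤ) ≤ P.beta c.2 + c.2 := by
  show c.1 < P.parts c.2 ↔ _
  unfold beta; omega

lemma ext_parts {P Q : Partition'} (h : P.parts = Q.parts) : P = Q := by
  cases P; cases Q; simpa using h

lemma ext_beta {P Q : Partition'} (h : P.beta = Q.beta) : P = Q := by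
  refine ext_parts (funext fun n => ?_)
  rw [P.parts_eq_beta n, Q.parts_eq_beta n, h]

noncomputable def ofBeta (f : ℕ → ℤ) (h1 : ∀ n, f (n+1) < f n) (h2 : ∀ n : ℕ, -(n:ℤ) - 1 ≤ f n)
    (h3 : ∃ N : ℕ, ∀ n ≥ N, f n = -(n:ℤ) - 1) : Partition' where
  parts n := (f n + n + 1).toNat
  antitone := antitone_nat_of_succ_le (fun n => by
    have := h1 n; have := h2 n; have := h2 (n+1); push_cast; omega)
  eventually_zero := by
    obtain ⟨N, hN⟩ := h3
    exact ⟨N, fun n hn => by show (f n + n + 1).toNat = 0; rw [hN n hn]; omega⟩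

lemma ofBeta_beta (f : ℕ → ℤ) (h1 : ∀ n, f (n+1) < f n) (h2 : ∀ n : ℕ, -(n:ℤ) - 1 ≤ f n)
    (h3 : ∃ N : ℕ, ∀ n ≥ N, f n = -(n:ℤ) - 1) (n : ℕ) : (ofBeta f h1 h2 h3).beta n = f n := by
  have := h2 n
  show ((((f n + n + 1).toNat : ℕ)) : ℤ) - n - 1 = f n
  omega

end Partition'

lemma strictAnti_le_of_range_subset {f g : ℕ → ℤ} (hf : StrictAnti f) (hg : StrictAnti g)
    (h : Set.range f ⊆ Set.range g) : ∀ n, (∀ m < n, f m = g m) → f n ≤ g n := by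
  intro n ih
  obtain ⟨m, hm⟩ := h (Set.mem_range_self n)
  rcases lt_or_ge m n with hmn | hmn
  · exfalso
    have h1 : f m = g m := ih m hmn
    have : f n < f m := hf hmn
    omega
  · calc f n = g m := hm.symm
      _ ≤ g n := hg.antitone hmn

lemma strictAnti_range_eq {f g : ℕ → ℤ} (hf : StrictAnti f) (hg : StrictAnti g)
    (h : Set.range f = Set.range g) : f = g := by
  funext n
  induction n using Nat.strong_induction_on with
  | _ n ih =>
    have h1 := strictAnti_le_of_range_subset hf hg h.le n ih
    have h2 := strictAnti_le_of_range_subset hg hf h.ge n (fun m hm => (ih m hm).symm)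
    omega

end Aux
section Aux2
open Finset

lemma int_Ico_eq_image (a b : ℤ) :
    Finset.Ico a b = (Finset.range (b - a).toNat).image (fun j : ℕ => a + (j:ℤ)) := by
  ext x
  simp only [Finset.mem_Ico, Finset.mem_image, Finset.mem_range]
  constructor
  · intro ⟨h1, h2⟩
    exact ⟨(x - a).toNat, by omega, by omega⟩
  · rintro ⟨j, hj, rfl⟩
    omega

lemma int_add_injOn (a : ℤ) : Function.Injective (fun j : ℕ => a + (j:ℤ)) := by
  intro x y h; simpa using h

lemma two_mul_sum_range (n : ℕ) : 2 * (∑ j ∈ Finset.range n, (j:ℤ)) = n * (n - 1) := by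
  induction n with
  | zero => simp
  | succ k ih => rw [Finset.sum_range_succ]; push_cast; push_cast at ih; ring_nf; ring_nf at ih; omega

lemma two_mul_sum_Ico (c a b : ℤ) (h : a ≤ b) :
    2 * (∑ q ∈ Finset.Ico a b, (q + c)) = (b - a) * (b + a - 1 + 2*c) := by
  rw [int_Ico_eq_image a b, Finset.sum_image (fun x _ y _ hxy => int_add_injOn a hxy)]
  have h2 : ∀ j ∈ Finset.range (b-a).toNat, (a + (j:ℤ)) + c = (a + c) + (j:ℤ) := by
    intro j _; ring
  rw [Finset.sum_congr rfl h2, Finset.sum_add_distrib, Finset.sum_const, Finset.card_range]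
  have h3 := two_mul_sum_range (b-a).toNat
  have h4 : (((b-a).toNat : ℤ)) = b - a := by omega
  rw [h4] at h3
  simp only [nsmul_eq_mul, h4]
  linear_combination h3

lemma card_int_Ico (a b : ℤ) : ((Finset.Ico a b).card : ℤ) = max (b - a) 0 := by
  rw [int_Ico_eq_image a b, Finset.card_image_of_injective _ (int_add_injOn a), Finset.card_range]
  omega

lemma sum_ones_Ico (a b : ℤ) (h : a ≤ b) : (∑ _q ∈ Finset.Ico a b, (1:ℤ)) = b - a := by
  rw [Finset.sum_const, nsmul_eq_mul, mul_one]
  have := card_int_Ico a b; omega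

-- mod/div facts
lemma emod_ediv_class {l : ℕ} (hl : 0 < l) (q i : ℤ) (h0 : 0 ≤ i) (h1 : i < l) :
    ((l:ℤ)*q + i) % l = i ∧ ((l:ℤ)*q + i) / l = q := by
  have hm : ((l:ℤ)*q + i) % l = i := by
    rw [add_comm, Int.add_mul_emod_self_left]
    exact Int.emod_eq_of_lt h0 h1
  have hd : ((l:ℤ)*q + i) / l = q := by
    rw [add_comm, Int.add_mul_ediv_left i q (by exact_mod_cast hl.ne' : (l:ℤ) ≠ 0),
      Int.ediv_eq_zero_of_lt h0 h1]
    ring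
  exact ⟨hm, hd⟩

lemma Ico_mul_biUnion (l : ℕ) (hl : 0 < l) (u v : ℤ) :
    Finset.Ico ((l:ℤ)*u) ((l:ℤ)*v) =
      (Finset.range l).biUnion (fun i => (Finset.Ico u v).image (fun q => (l:ℤ)*q + i)) := by
  ext b
  simp only [Finset.mem_Ico, Finset.mem_biUnion, Finset.mem_image, Finset.mem_range]
  constructor
  · intro ⟨h1, h2⟩
    have hl' : (0:ℤ) < l := by exact_mod_cast hl
    have e0 : (0:ℤ) ≤ b % l := Int.emod_nonneg b hl'.ne'
    have e1 : b % l < l := Int.emod_lt_of_pos b hl'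
    refine ⟨(b % l).toNat, by omega, b / l, ⟨?_, ?_⟩, ?_⟩
    · rw [Int.le_ediv_iff_mul_le hl']; linarith [mul_comm u (l:ℤ)]
    · rw [Int.ediv_lt_iff_lt_mul hl']; linarith [mul_comm v (l:ℤ)]
    · have := Int.mul_ediv_add_emod b l; omega
  · rintro ⟨i, hi, q, ⟨hq1, hq2⟩, rfl⟩
    have hl' : (0:ℤ) < l := by exact_mod_cast hl
    constructor
    · have : (l:ℤ)*u ≤ l*q := by exact mul_le_mul_of_nonneg_left hq1 hl'.le
      omega
    · have : (l:ℤ)*(q+1) ≤ l*v := by exact mul_le_mul_of_nonneg_left (by omega) hl'.le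
      have : (l:ℤ)*(q+1) = l*q + l := by ring
      omega

lemma class_inj {l : ℕ} (hl : 0 < l) {i : ℕ} (hi : i < l) :
    Function.Injective (fun q : ℤ => (l:ℤ)*q + i) := by
  intro x y h
  simp only at h
  have := (emod_ediv_class hl x i (by positivity) (by exact_mod_cast hi)).2
  have := (emod_ediv_class hl y i (by positivity) (by exact_mod_cast hi)).2
  rw [h] at *
  omega

lemma sum_Ico_mul (l : ℕ) (hl : 0 < l) (u v : ℤ) (g : ℤ → ℤ) :
    ∑ b ∈ Finset.Ico ((l:ℤ)*u) ((l:ℤ)*v), g b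
      = ∑ i ∈ Finset.range l, ∑ q ∈ Finset.Ico u v, g ((l:ℤ)*q + i) := by
  rw [Ico_mul_biUnion l hl u v, Finset.sum_biUnion]
  · exact Finset.sum_congr rfl (fun i hi => Finset.sum_image
      (fun x _ y _ h => class_inj hl (Finset.mem_range.mp hi) h))
  · intro i hi j hj hij
    simp only [Finset.mem_coe, Finset.mem_range] at hi hj
    apply Finset.disjoint_left.mpr
    intro b hbi hbj
    simp only [Finset.mem_image] at hbi hbj
    obtain ⟨q, _, rfl⟩ := hbi
    obtain ⟨q', _, he⟩ := hbj
    have e1 := (emod_ediv_class hl q i (by positivity) (by exact_mod_cast hi)).1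
    have e2 := (emod_ediv_class hl q' j (by positivity) (by exact_mod_cast hj)).1
    rw [he] at e2
    exact hij (by omega)

lemma sum_filter_Ico_mul (l : ℕ) (hl : 0 < l) (u v : ℤ) (g : ℤ → ℤ)
    (Q : ℤ → Prop) [DecidablePred Q] (p : ℕ → ℤ)
    (hQ : ∀ i < l, ∀ q : ℤ, Q ((l:ℤ)*q + i) ↔ q < p i)
    (hp : ∀ i < l, u ≤ p i ∧ p i ≤ v) :
    ∑ b ∈ (Finset.Ico ((l:ℤ)*u) ((l:ℤ)*v)).filter Q, g b
      = ∑ i ∈ Finset.range l, ∑ q ∈ Finset.Ico u (p i), g ((l:ℤ)*q + i) := by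
  rw [Ico_mul_biUnion l hl u v, Finset.filter_biUnion, Finset.sum_biUnion]
  · refine Finset.sum_congr rfl (fun i hi => ?_)
    have hi' := Finset.mem_range.mp hi
    have himg : ((Finset.Ico u v).image (fun q => (l:ℤ)*q + i)).filter Q
        = (Finset.Ico u (p i)).image (fun q => (l:ℤ)*q + i) := by
      ext b
      simp only [Finset.mem_filter, Finset.mem_image, Finset.mem_Ico]
      constructor
      · rintro ⟨⟨q, ⟨hq1, hq2⟩, rfl⟩, hQb⟩
        exact ⟨q, ⟨hq1, (hQ i hi' q).mp hQb⟩, rfl⟩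
      · rintro ⟨q, ⟨hq1, hq2⟩, rfl⟩
        exact ⟨⟨q, ⟨hq1, lt_of_lt_of_le hq2 (hp i hi').2⟩, rfl⟩, (hQ i hi' q).mpr hq2⟩
    rw [himg, Finset.sum_image (fun x _ y _ h => class_inj hl hi' h)]
  · intro i hi j hj hij
    simp only [Finset.mem_coe, Finset.mem_range] at hi hj
    apply Finset.disjoint_left.mpr
    intro b hbi hbj
    simp only [Finset.mem_filter, Finset.mem_image] at hbi hbj
    obtain ⟨⟨q, _, rfl⟩, _⟩ := hbi
    obtain ⟨⟨q', _, he⟩, _⟩ := hbj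
    have e1 := (emod_ediv_class hl q i (by positivity) (by exact_mod_cast hi)).1
    have e2 := (emod_ediv_class hl q' j (by positivity) (by exact_mod_cast hj)).1
    rw [he] at e2
    exact hij (by omega)

end Aux2
section Aux3
open Finset

lemma dvd_shift_iff (l : ℕ) (r : ℤ) (m n : ℤ) :
    (m - n) ≡ -r [ZMOD (l:ℤ)] ↔ (l:ℤ) ∣ (m - n + r) := by
  rw [Int.modEq_iff_dvd]
  have h : -r - (m - n) = -(m - n + r) := by ring
  rw [h, dvd_neg]

lemma contentCount_formula (l : ℕ) (hl : 0 < l) (r : ℕ) (hr : r < l) (P : Partition')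
    (N : ℕ) (hN : ∀ n ≥ N, P.beta n = -(n:ℤ) - 1) :
    (contentCount l P (-(r:ℤ)) : ℤ)
      = ∑ n ∈ Finset.range N, ((P.beta n + r)/l - ((-(n:ℤ)-1) + r)/l) := by
  classical
  have hl' : (0:ℤ) < l := by exact_mod_cast hl
  set g : ℤ → ℤ := fun x => (x + r) / l with hg
  set t1 : ℕ → ℤ := fun n => g (-(n:ℤ)-1) + 1 with ht1
  set t2 : ℕ → ℤ := fun n => g (P.beta n) + 1 with ht2
  set rowF : ℕ → Finset ℕ := fun n => (Finset.range (P.parts n)).filter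
    (fun m => ((m:ℤ) - n) ≡ -(r:ℤ) [ZMOD (l:ℤ)]) with hrowF
  -- row structure
  have hrow : ∀ n : ℕ, rowF n = (Finset.Ico (t1 n) (t2 n)).image
      (fun t => ((l:ℤ)*t - r + n).toNat) := by
    intro n
    ext m
    simp only [hrowF, Finset.mem_filter, Finset.mem_range, Finset.mem_image, Finset.mem_Ico]
    rw [dvd_shift_iff]
    constructor
    · rintro ⟨hm, t, ht⟩
      refine ⟨t, ⟨?_, ?_⟩, by omega⟩
      · simp only [ht1, hg]
        have : (-(n:ℤ)-1+r)/l < t ↔ (-(n:ℤ)-1+r) < t * l := Int.ediv_lt_iff_lt_mul hl'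
        have hmn : (0:ℤ) ≤ m := by positivity
        rw [mul_comm] at this
        omega
      · simp only [ht2, hg]
        have : t ≤ (P.beta n + r)/l ↔ t * l ≤ P.beta n + r := Int.le_ediv_iff_mul_le hl'
        have hb : (m:ℤ) ≤ P.beta n + n ↔ (m:ℤ) < P.parts n := by
          unfold Partition'.beta; omega
        rw [mul_comm] at this
        omega
    · rintro ⟨t, ⟨htl, htu⟩, rfl⟩
      simp only [ht1, ht2, hg] at htl htu
      have h1 : (-(n:ℤ)-1+r)/l < t ↔ (-(n:ℤ)-1+r) < t * l := Int.ediv_lt_iff_lt_mul hl'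
      have h2 : t ≤ (P.beta n + r)/l ↔ t * l ≤ P.beta n + r := Int.le_ediv_iff_mul_le hl'
      have hm0 : (0:ℤ) ≤ (l:ℤ)*t - r + n := by rw [mul_comm] at h1; omega
      have hmu : (l:ℤ)*t - r + n ≤ P.beta n + n := by rw [mul_comm] at h2; omega
      have hbeta : P.beta n = (P.parts n : ℤ) - n - 1 := rfl
      constructor
      · omega
      · exact ⟨t, by omega⟩
  -- the content set as a finset
  set cf : Finset (ℕ × ℕ) := (Finset.range N).biUnion
    (fun n => (rowF n).image (fun m => (m, n))) with hcf
  have hset : {c : ℕ × ℕ | c ∈ P.cells ∧ ((c.1 : ℤ) - (c.2 : ℤ)) ≡ -(r:ℤ) [ZMOD (l:ℤ)]}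
      = ↑cf := by
    ext ⟨m, n⟩
    simp only [Set.mem_setOf_eq, hcf, Finset.coe_biUnion, Set.mem_iUnion, Finset.mem_coe,
      Finset.mem_biUnion, Finset.mem_range, Finset.mem_image, hrowF, Finset.mem_filter]
    constructor
    · rintro ⟨hc, hmod⟩
      have hm : m < P.parts n := hc
      have hnN : n < N := by
        by_contra hn
        have := hN n (by omega)
        have : P.parts n = 0 := by unfold Partition'.beta at this; omega
        omega
      exact ⟨n, hnN, m, ⟨by omega, hmod⟩, rfl⟩
    · rintro ⟨n', _, m', ⟨hm', hmod⟩, he⟩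
      cases he
      exact ⟨hm', hmod⟩
  have hcard : contentCount l P (-(r:ℤ)) = cf.card := by
    rw [contentCount, hset, Set.ncard_coe_finset]
  rw [hcard]
  have hdisj : ∀ i ∈ Finset.range N, ∀ j ∈ Finset.range N, i ≠ j →
      Disjoint ((rowF i).image (fun m => (m, i))) ((rowF j).image (fun m => (m, j))) := by
    intro i _ j _ hij
    apply Finset.disjoint_left.mpr
    rintro ⟨m, n⟩ hbi hbj
    simp only [Finset.mem_image] at hbi hbj
    obtain ⟨_, _, h1⟩ := hbi
    obtain ⟨_, _, h2⟩ := hbj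
    cases h1
    injection h2 with h2a h2b
    exact hij h2b.symm
  rw [Finset.card_biUnion hdisj]
  push_cast
  refine Finset.sum_congr rfl (fun n _ => ?_)
  rw [Finset.card_image_of_injective _ (fun x y h => (Prod.mk.injEq _ _ _ _).mp h |>.1)]
  rw [hrow n]
  have hginj : Set.InjOn (fun t => ((l:ℤ)*t - r + n).toNat) (Finset.Ico (t1 n) (t2 n)) := by
    intro x hx y hy hxy
    simp only [Finset.coe_Ico, Set.mem_Ico] at hx hy
    simp only [ht1, hg] at hx hy
    have h1 : (-(n:ℤ)-1+r)/l < x ↔ (-(n:ℤ)-1+r) < x * l := Int.ediv_lt_iff_lt_mul hl'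
    have h1' : (-(n:ℤ)-1+r)/l < y ↔ (-(n:ℤ)-1+r) < y * l := Int.ediv_lt_iff_lt_mul hl'
    have hx0 : (0:ℤ) ≤ (l:ℤ)*x - r + n := by rw [mul_comm] at h1; omega
    have hy0 : (0:ℤ) ≤ (l:ℤ)*y - r + n := by rw [mul_comm] at h1'; omega
    simp only at hxy
    have : (l:ℤ)*x - r + n = (l:ℤ)*y - r + n := by omega
    have hll : (l:ℤ) ≠ 0 := hl'.ne'
    have : (l:ℤ)*x = (l:ℤ)*y := by omega
    exact mul_left_cancel₀ hll this
  rw [Finset.card_image_of_injOn hginj]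
  have ht12 : t1 n ≤ t2 n := by
    simp only [ht1, ht2, hg]
    have := Int.ediv_le_ediv hl' (by have := P.beta_ge n; omega : -(n:ℤ)-1+r ≤ P.beta n + r)
    omega
  have := card_int_Ico (t1 n) (t2 n)
  simp only [ht1, ht2, hg] at *
  omega

end Aux3
section Aux4
open Finset

/-- `p` lists the quotient charges of `P`: the class-`i` beads of the Maya diagram of `P`
are exactly positions `l*q+i` with `q < p i`. -/
def HasParams (l : ℕ) (P : Partition') (p : ℕ → ℤ) : Prop :=
  ∀ i < l, ∀ q : ℤ, (∃ n, P.beta n = (l:ℤ)*q + i) ↔ q < p i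

lemma transfer_sum (l : ℕ) (hl : 0 < l) (P : Partition') (p : ℕ → ℤ)
    (h : HasParams l P p) (g : ℤ → ℤ)
    (N : ℕ) (hN : ∀ n ≥ N, P.beta n = -(n:ℤ) - 1)
    (M : ℤ) (hM1 : (N:ℤ) ≤ (l:ℤ)*M) (hM2 : P.beta 0 < (l:ℤ)*M)
    (hM3 : ∀ i < l, -M ≤ p i ∧ p i ≤ M) :
    ∑ n ∈ Finset.range N, (g (P.beta n) - g (-(n:ℤ)-1))
      = ∑ i ∈ Finset.range l,
          ((∑ q ∈ Finset.Ico (-M) (p i), g ((l:ℤ)*q+i))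
            - ∑ q ∈ Finset.Ico (-M) (0:ℤ), g ((l:ℤ)*q+i)) := by
  classical
  have hl' : (0:ℤ) < l := by exact_mod_cast hl
  have hM0 : 0 ≤ M := by nlinarith [(by positivity : (0:ℤ) ≤ (N:ℤ))]
  have hT0 : (0:ℤ) ≤ (l:ℤ)*M := by positivity
  set T : ℤ := (l:ℤ)*M with hT
  set Q : ℤ → Prop := fun b => ∃ n, P.beta n = b with hQ
  -- the filtered interval splits as tail ∪ image
  have hsplit : (Finset.Ico (-T) T).filter Q
      = (Finset.Ico (-T) (-(N:ℤ))) ∪ (Finset.range N).image P.beta := by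
    ext b
    simp only [Finset.mem_filter, Finset.mem_Ico, Finset.mem_union, Finset.mem_image,
      Finset.mem_range, hQ]
    constructor
    · rintro ⟨⟨hb1, hb2⟩, n, rfl⟩
      rcases lt_or_ge n N with hn | hn
      · exact Or.inr ⟨n, hn, rfl⟩
      · left
        have := hN n hn
        omega
    · rintro (⟨hb1, hb2⟩ | ⟨n, hn, rfl⟩)
      · refine ⟨⟨hb1, by omega⟩, (-1-b).toNat, ?_⟩
        have : ((-1-b).toNat : ℤ) = -1-b := by omega
        rw [hN (-1-b).toNat (by omega)]
        omega
      · have h1 := P.beta_le n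
        have h2 := P.beta_ge n
        exact ⟨⟨by omega, by omega⟩, n, rfl⟩
  have hdisj : Disjoint (Finset.Ico (-T) (-(N:ℤ))) ((Finset.range N).image P.beta) := by
    apply Finset.disjoint_left.mpr
    intro b hb1 hb2
    simp only [Finset.mem_Ico] at hb1
    simp only [Finset.mem_image, Finset.mem_range] at hb2
    obtain ⟨n, hn, rfl⟩ := hb2
    have := P.beta_ge n
    omega
  have e1 : ∑ b ∈ (Finset.Ico (-T) T).filter Q, g b
      = (∑ b ∈ Finset.Ico (-T) (-(N:ℤ)), g b) + ∑ n ∈ Finset.range N, g (P.beta n) := by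
    rw [hsplit, Finset.sum_union hdisj,
      Finset.sum_image (fun x _ y _ hxy => P.beta_strictAnti.injective hxy)]
  have e2 : ∑ b ∈ Finset.Ico (-T) (0:ℤ), g b
      = (∑ b ∈ Finset.Ico (-T) (-(N:ℤ)), g b) + ∑ b ∈ Finset.Ico (-(N:ℤ)) (0:ℤ), g b := by
    rw [← Finset.Ico_union_Ico_eq_Ico (by omega : -T ≤ -(N:ℤ)) (by omega : -(N:ℤ) ≤ (0:ℤ)),
      Finset.sum_union (Finset.Ico_disjoint_Ico_consecutive _ _ _)]
  have e3 : ∑ b ∈ Finset.Ico (-(N:ℤ)) (0:ℤ), g b = ∑ n ∈ Finset.range N, g (-(n:ℤ)-1) := by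
    have himg : Finset.Ico (-(N:ℤ)) (0:ℤ) = (Finset.range N).image (fun n : ℕ => -(n:ℤ)-1) := by
      ext b
      simp only [Finset.mem_Ico, Finset.mem_image, Finset.mem_range]
      constructor
      · intro ⟨h1, h2⟩; exact ⟨(-1-b).toNat, by omega, by omega⟩
      · rintro ⟨n, hn, rfl⟩; omega
    rw [himg, Finset.sum_image (fun x _ y _ hxy => by omega)]
  -- class decompositions
  have hQc : ∀ i < l, ∀ q : ℤ, Q ((l:ℤ)*q + i) ↔ q < p i := fun i hi q => h i hi q
  have e4 : ∑ b ∈ (Finset.Ico (-T) T).filter Q, g b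
      = ∑ i ∈ Finset.range l, ∑ q ∈ Finset.Ico (-M) (p i), g ((l:ℤ)*q + i) := by
    have := sum_filter_Ico_mul l hl (-M) M g Q p hQc (fun i hi => (hM3 i hi))
    have hh : (l:ℤ)*(-M) = -T := by ring
    rw [hh] at this
    exact this
  have e5 : ∑ b ∈ Finset.Ico (-T) (0:ℤ), g b
      = ∑ i ∈ Finset.range l, ∑ q ∈ Finset.Ico (-M) (0:ℤ), g ((l:ℤ)*q + i) := by
    have := sum_Ico_mul l hl (-M) 0 g
    have hh : (l:ℤ)*(-M) = -T := by ring
    have h0 : (l:ℤ)*0 = 0 := by ring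
    rw [hh, h0] at this
    exact this
  rw [Finset.sum_sub_distrib, Finset.sum_sub_distrib]
  linarith [e1, e2, e3, e4, e5]

end Aux4

section Aux5
open Finset

lemma hasParams_choose_M (l : ℕ) (hl : 0 < l) (P : Partition') (p : ℕ → ℤ) (N : ℕ) :
    ∃ M : ℤ, (N:ℤ) ≤ (l:ℤ)*M ∧ P.beta 0 < (l:ℤ)*M ∧ (∀ i < l, -M ≤ p i ∧ p i ≤ M) := by
  have hl' : (1:ℤ) ≤ l := by exact_mod_cast hl
  set S : ℤ := ∑ i ∈ Finset.range l, |p i| with hS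
  have hS0 : 0 ≤ S := Finset.sum_nonneg (fun i _ => abs_nonneg _)
  have hN0 : (0:ℤ) ≤ (N:ℤ) := by positivity
  have hb0 := abs_nonneg (P.beta 0)
  have hbb := le_abs_self (P.beta 0)
  refine ⟨(N:ℤ) + |P.beta 0| + S + 1, ?_, ?_, ?_⟩
  · nlinarith
  · nlinarith
  · intro i hi
    have : |p i| ≤ S := Finset.single_le_sum (fun j (_ : j ∈ Finset.range l) => abs_nonneg (p j))
      (Finset.mem_range.mpr hi)
    have h1 := le_abs_self (p i)
    have h2 := neg_abs_le (p i)
    omega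

lemma hasParams_sum_eq_zero (l : ℕ) (hl : 0 < l) (P : Partition') (p : ℕ → ℤ)
    (h : HasParams l P p) : ∑ i ∈ Finset.range l, p i = 0 := by
  obtain ⟨N, hN⟩ := P.exists_beta_bound
  obtain ⟨M, hM1, hM2, hM3⟩ := hasParams_choose_M l hl P p N
  have key := transfer_sum l hl P p h (fun _ => 1) N hN M hM1 hM2 hM3
  simp only [sub_self, Finset.sum_const_zero] at key
  have hM0 : 0 ≤ M := by
    have := hM3 0 hl; omega
  have heval : ∀ i ∈ Finset.range l,
      ((∑ _q ∈ Finset.Ico (-M) (p i), (1:ℤ)) - ∑ _q ∈ Finset.Ico (-M) (0:ℤ), (1:ℤ)) = p i := by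
    intro i hi
    rw [sum_ones_Ico _ _ (by have := (hM3 i (Finset.mem_range.mp hi)).1; omega),
      sum_ones_Ico _ _ (by omega : -M ≤ (0:ℤ))]
    ring
  rw [Finset.sum_congr rfl heval] at key
  exact key.symm

lemma g_class_eval (l : ℕ) (hl : 0 < l) (r : ℕ) (hr : r < l) (i : ℕ) (hi : i < l) (q : ℤ) :
    ((l:ℤ)*q + i + r) / l = q + (if l ≤ i + r then 1 else 0) := by
  have hl' : (0:ℤ) < l := by exact_mod_cast hl
  have h1 : (l:ℤ)*q + i + r = ((i:ℤ) + r) + (l:ℤ)*q := by ring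
  rw [h1, Int.add_mul_ediv_left _ q hl'.ne']
  split_ifs with hc
  · have h2 : ((i:ℤ) + r) = ((i:ℤ) + r - l) + (l:ℤ)*1 := by ring
    rw [h2, Int.add_mul_ediv_left _ 1 hl'.ne',
      Int.ediv_eq_zero_of_lt (by push_cast; omega) (by push_cast; omega)]
    ring
  · rw [Int.ediv_eq_zero_of_lt (by positivity) (by push_cast; omega)]
    ring

lemma hasParams_content (l : ℕ) (hl : 0 < l) (r : ℕ) (hr : r < l) (P : Partition')
    (p : ℕ → ℤ) (h : HasParams l P p) :
    2 * (contentCount l P (-(r:ℤ)) : ℤ)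
      = (∑ i ∈ Finset.range l, (p i)^2)
        + 2 * ∑ i ∈ (Finset.range l).filter (fun i => l ≤ i + r), p i := by
  obtain ⟨N, hN⟩ := P.exists_beta_bound
  obtain ⟨M, hM1, hM2, hM3⟩ := hasParams_choose_M l hl P p N
  have hM0 : 0 ≤ M := by have := hM3 0 hl; omega
  set g : ℤ → ℤ := fun x => (x + r) / l with hg
  have key := transfer_sum l hl P p h g N hN M hM1 hM2 hM3
  have hcf := contentCount_formula l hl r hr P N hN
  have hsum0 := hasParams_sum_eq_zero l hl P p h
  have hterm : ∀ i ∈ Finset.range l,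
      2 * ((∑ q ∈ Finset.Ico (-M) (p i), g ((l:ℤ)*q+i))
        - ∑ q ∈ Finset.Ico (-M) (0:ℤ), g ((l:ℤ)*q+i))
      = (p i)^2 - p i + 2 * (if l ≤ i + r then 1 else 0) * p i := by
    intro i hi
    have hi' := Finset.mem_range.mp hi
    set c : ℤ := if l ≤ i + r then 1 else 0 with hc
    have hgeval : ∀ q : ℤ, g ((l:ℤ)*q+i) = q + c := by
      intro q
      exact g_class_eval l hl r hr i hi' q
    rw [Finset.sum_congr rfl (fun q _ => hgeval q), Finset.sum_congr rfl (fun q _ => hgeval q)]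
    have hMp := (hM3 i hi').1
    have e1 := two_mul_sum_Ico c (-M) (p i) (by omega)
    have e2 := two_mul_sum_Ico c (-M) (0:ℤ) (by omega)
    nlinarith [e1, e2]
  have key2 : 2 * ∑ n ∈ Finset.range N, (g (P.beta n) - g (-(n:ℤ)-1))
      = ∑ i ∈ Finset.range l, ((p i)^2 - p i + 2 * (if l ≤ i + r then 1 else 0) * p i) := by
    rw [key, Finset.mul_sum]
    exact Finset.sum_congr rfl hterm
  have e3 : ∑ i ∈ Finset.range l, ((p i)^2 - p i + 2 * (if l ≤ i + r then 1 else 0) * p i)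
      = (∑ i ∈ Finset.range l, (p i)^2) - (∑ i ∈ Finset.range l, p i)
        + 2 * ∑ i ∈ (Finset.range l).filter (fun i => l ≤ i + r), p i := by
    rw [Finset.sum_add_distrib, Finset.sum_sub_distrib]
    congr 1
    rw [Finset.sum_filter, Finset.mul_sum]
    exact Finset.sum_congr rfl (fun i _ => by split_ifs <;> ring)
  rw [hcf, key2, e3, hsum0]
  ring

lemma hasParams_p_unique (l : ℕ) (P : Partition') (p p' : ℕ → ℤ)
    (h1 : HasParams l P p) (h2 : HasParams l P p') : ∀ i < l, p i = p' i := by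
  intro i hi
  have a1 := h1 i hi
  have a2 := h2 i hi
  by_contra hne
  rcases lt_or_gt_of_ne hne with hlt | hgt
  · have := (a1 (p i)).mp ((a2 (p i)).mpr hlt)
    omega
  · have := (a2 (p' i)).mp ((a1 (p' i)).mpr hgt)
    omega

lemma hasParams_partition_unique (l : ℕ) (hl : 0 < l) (P P' : Partition') (p : ℕ → ℤ)
    (h1 : HasParams l P p) (h2 : HasParams l P' p) : P = P' := by
  have hl' : (0:ℤ) < l := by exact_mod_cast hl
  have hrange : Set.range P.beta = Set.range P'.beta := by
    ext b
    have hdecomp := Int.mul_ediv_add_emod b l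
    have e0 : (0:ℤ) ≤ b % l := Int.emod_nonneg b hl'.ne'
    have e1 : b % l < l := Int.emod_lt_of_pos b hl'
    set i : ℕ := (b % l).toNat with hi
    have hil : i < l := by omega
    have hb : (l:ℤ) * (b / l) + i = b := by omega
    have c1 := h1 i hil (b / l)
    have c2 := h2 i hil (b / l)
    rw [hb] at c1 c2
    simp only [Set.mem_range]
    exact c1.trans c2.symm
  exact Partition'.ext_beta (strictAnti_range_eq P.beta_strictAnti P'.beta_strictAnti hrange)

lemma hasParams_bead (l : ℕ) (hl : 0 < l) (P : Partition') (p : ℕ → ℤ)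
    (h : HasParams l P p) : ∀ n, ∃ m, P.beta m = P.beta n - l := by
  intro n
  have hl' : (0:ℤ) < l := by exact_mod_cast hl
  set b : ℤ := P.beta n with hb
  have hdecomp := Int.mul_ediv_add_emod b l
  have e0 : (0:ℤ) ≤ b % l := Int.emod_nonneg b hl'.ne'
  have e1 : b % l < l := Int.emod_lt_of_pos b hl'
  set i : ℕ := (b % l).toNat with hi
  have hil : i < l := by omega
  have h1 : b / l < p i := (h i hil (b / l)).mp ⟨n, by omega⟩
  have h2 : ∃ m, P.beta m = (l:ℤ) * (b / l - 1) + i := (h i hil _).mpr (by omega)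
  obtain ⟨m, hm⟩ := h2
  refine ⟨m, ?_⟩
  rw [hm]
  have : (l:ℤ) * (b / l - 1) = (l:ℤ) * (b / l) - l := by ring
  omega

lemma exists_params (l : ℕ) (hl : 0 < l) (P : Partition')
    (hbead : ∀ n, ∃ m, P.beta m = P.beta n - l) : ∃ p : ℕ → ℤ, HasParams l P p := by
  classical
  have hl' : (0:ℤ) < l := by exact_mod_cast hl
  have hl2 : (1:ℤ) ≤ l := by exact_mod_cast hl
  obtain ⟨N, hN⟩ := P.exists_beta_bound
  have H : ∀ i : ℕ, ∃ pi : ℤ, i < l → ∀ q : ℤ,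
      ((∃ n, P.beta n = (l:ℤ)*q + i) ↔ q < pi) := by
    intro i
    by_cases hil : i < l
    · have hi0 : (0:ℤ) ≤ i := by positivity
      have hii : (i:ℤ) < l := by exact_mod_cast hil
      have hex : ∃ q : ℤ, ¬ ∃ n, P.beta n = (l:ℤ)*q + i := by
        refine ⟨|P.beta 0| + 1, ?_⟩
        rintro ⟨n, hn⟩
        have h1 := P.beta_anti (Nat.zero_le n)
        have h0 := le_abs_self (P.beta 0)
        have h2 : (l:ℤ) * (|P.beta 0| + 1) ≥ |P.beta 0| + 1 := by
          nlinarith [abs_nonneg (P.beta 0)]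
        omega
      have hbdd : ∃ b : ℤ, ∀ z : ℤ, (¬ ∃ n, P.beta n = (l:ℤ)*z + i) → b ≤ z := by
        refine ⟨-(N:ℤ) - l - 1, fun z hz => ?_⟩
        by_contra hzb
        push_neg at hzb
        apply hz
        have hz0 : z ≤ 0 := by omega
        have hlz : (l:ℤ)*z ≤ z := by nlinarith
        have hsmall : (l:ℤ)*z + i ≤ -(N:ℤ) - 1 := by omega
        refine ⟨(-1 - ((l:ℤ)*z + i)).toNat, ?_⟩
        rw [hN _ (by omega)]
        omega
      obtain ⟨pi, hpi_mem, hpi_least⟩ := Int.exists_least_of_bdd hbdd hex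
      refine ⟨pi, fun _ q => ⟨?_, ?_⟩⟩
      · intro hq
        by_contra hqge
        push_neg at hqge
        have hall : ∀ q' : ℤ, pi ≤ q' → ¬ ∃ n, P.beta n = (l:ℤ)*q' + i := by
          refine fun q' hq' => Int.le_induction (motive := fun z _ => ¬ ∃ n, P.beta n = (l:ℤ)*z + i) hpi_mem ?_ q' hq'
          rintro qq hqq ih ⟨n, hn⟩
          obtain ⟨m, hm⟩ := hbead n
          refine ih ⟨m, ?_⟩
          rw [hm, hn]
          ring
        exact hall q hqge hq
      · intro hq
        by_contra hno
        exact absurd (hpi_least q hno) (by omega)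
    · exact ⟨0, fun h => absurd h hil⟩
  choose p hp using H
  exact ⟨p, fun i hi q => hp i hi q⟩

end Aux5
section Aux6
open Finset

lemma exists_partition_of_params (l : ℕ) (hl : 0 < l) (p : ℕ → ℤ)
    (hsum : ∑ i ∈ Finset.range l, p i = 0) : ∃ P : Partition', HasParams l P p := by
  classical
  have hl' : (0:ℤ) < l := by exact_mod_cast hl
  have hl2 : (1:ℤ) ≤ l := hl'
  set M : ℤ := (∑ i ∈ Finset.range l, |p i|) + 1 with hM
  have hM1 : 1 ≤ M := by
    have : 0 ≤ ∑ i ∈ Finset.range l, |p i| := Finset.sum_nonneg (fun i _ => abs_nonneg _)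
    omega
  have hpb : ∀ i < l, |p i| ≤ M - 1 := by
    intro i hi
    have : |p i| ≤ ∑ j ∈ Finset.range l, |p j| :=
      Finset.single_le_sum (fun j (_ : j ∈ Finset.range l) => abs_nonneg (p j))
        (Finset.mem_range.mpr hi)
    omega
  set memB : ℤ → Prop := fun b => b / l < p ((b % l).toNat) with hmemB
  have hclass : ∀ i < l, ∀ q : ℤ, (memB ((l:ℤ)*q + i) ↔ q < p i) := by
    intro i hi q
    obtain ⟨he, hd⟩ := emod_ediv_class hl q i (by positivity) (by exact_mod_cast hi)
    simp only [hmemB, he, hd, Int.toNat_natCast]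
  have hmod : ∀ b : ℤ, (b % l).toNat < l ∧ (l:ℤ) * (b / l) + ((b % l).toNat : ℤ) = b := by
    intro b
    have e0 : (0:ℤ) ≤ b % l := Int.emod_nonneg b hl'.ne'
    have e1 : b % l < l := Int.emod_lt_of_pos b hl'
    have := Int.mul_ediv_add_emod b l
    constructor
    · omega
    · omega
  have hlow : ∀ b : ℤ, b ≤ -(l:ℤ)*(M+1) → memB b := by
    intro b hb
    have h1 : b / l ≤ (((l:ℤ)*(-(M+1))) / l) := Int.ediv_le_ediv hl' (by linarith)
    rw [Int.mul_ediv_cancel_left _ hl'.ne'] at h1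
    have h2 := hpb ((b % l).toNat) (hmod b).1
    have h3 := abs_le.mp h2
    simp only [hmemB]
    omega
  have hhigh : ∀ b : ℤ, memB b → b < (l:ℤ)*M := by
    intro b hb
    have h2 := hpb ((b % l).toNat) (hmod b).1
    have h3 := abs_le.mp h2
    simp only [hmemB] at hb
    have h4 : b / l ≤ M - 2 := by omega
    have h5 := (hmod b).2
    have e1 : b % l < l := Int.emod_lt_of_pos b hl'
    have h6 : (l:ℤ) * (b / l) ≤ (l:ℤ)*(M-2) := mul_le_mul_of_nonneg_left h4 hl'.le
    have h7 : (l:ℤ)*(M-2) = (l:ℤ)*M - 2*(l:ℤ) := by ring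
    have e2 : ((b % l).toNat : ℤ) = b % l := by
      have := Int.emod_nonneg b hl'.ne'; omega
    linarith
  -- count identity
  have hcnt : ∀ M' : ℤ, M ≤ M' →
      (∑ b ∈ (Finset.Ico (-((l:ℤ)*M')) ((l:ℤ)*M')).filter memB, (1:ℤ)) = (l:ℤ)*M' := by
    intro M' hM'
    have hbounds : ∀ i < l, -M' ≤ p i ∧ p i ≤ M' := by
      intro i hi
      have := abs_le.mp (hpb i hi)
      omega
    have := sum_filter_Ico_mul l hl (-M') M' (fun _ => 1) memB p
      (fun i hi q => hclass i hi q) hbounds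
    have hm : (l:ℤ)*(-M') = -((l:ℤ)*M') := by ring
    rw [hm] at this
    rw [this]
    have heval : ∀ i ∈ Finset.range l,
        (∑ _q ∈ Finset.Ico (-M') (p i), (1:ℤ)) = p i + M' := by
      intro i hi
      rw [sum_ones_Ico _ _ (by have := (hbounds i (Finset.mem_range.mp hi)).1; omega)]
      ring
    rw [Finset.sum_congr rfl heval, Finset.sum_add_distrib, hsum, Finset.sum_const,
      Finset.card_range, zero_add, nsmul_eq_mul]
  -- count lower bound on upper segments
  have hcnt_ge : ∀ M' : ℤ, M ≤ M' → ∀ x : ℤ, -((l:ℤ)*M') ≤ x → x ≤ 0 →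
      -x ≤ ∑ b ∈ (Finset.Ico x ((l:ℤ)*M')).filter memB, (1:ℤ) := by
    intro M' hM' x hx1 hx2
    have hT0 : (0:ℤ) < (l:ℤ)*M' := by nlinarith
    have hsplit : (Finset.Ico (-((l:ℤ)*M')) ((l:ℤ)*M')).filter memB
        = ((Finset.Ico (-((l:ℤ)*M')) x).filter memB) ∪ ((Finset.Ico x ((l:ℤ)*M')).filter memB) := by
      rw [← Finset.filter_union, Finset.Ico_union_Ico_eq_Ico hx1 (by omega)]
    have hdisj : Disjoint ((Finset.Ico (-((l:ℤ)*M')) x).filter memB)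
        ((Finset.Ico x ((l:ℤ)*M')).filter memB) :=
      Finset.disjoint_filter_filter (Finset.Ico_disjoint_Ico_consecutive _ _ _)
    have e1 := hcnt M' hM'
    rw [hsplit, Finset.sum_union hdisj] at e1
    have e2 : (∑ b ∈ (Finset.Ico (-((l:ℤ)*M')) x).filter memB, (1:ℤ))
        ≤ ∑ b ∈ Finset.Ico (-((l:ℤ)*M')) x, (1:ℤ) :=
      Finset.sum_le_sum_of_subset_of_nonneg (Finset.filter_subset _ _)
        (fun _ _ _ => by norm_num)
    rw [sum_ones_Ico _ _ (by omega)] at e2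
    omega
  -- the enumeration
  have hinh : ∃ b : ℤ, memB b := ⟨-(l:ℤ)*(M+1), hlow _ le_rfl⟩
  have hbddabove : ∃ ub : ℤ, ∀ z, memB z → z ≤ ub := ⟨(l:ℤ)*M, fun z hz => (hhigh z hz).le⟩
  have htop : ∃ ub : ℤ, memB ub ∧ ∀ z, memB z → z ≤ ub :=
    Int.exists_greatest_of_bdd hbddabove hinh
  have hstep : ∀ x : ℤ, ∃ y : ℤ, (memB y ∧ y < x) ∧ ∀ z, memB z ∧ z < x → z ≤ y := by
    intro x
    have hinh2 : ∃ b : ℤ, memB b ∧ b < x := by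
      refine ⟨min (-(l:ℤ)*(M+1)) (x-1), hlow _ (min_le_left _ _), ?_⟩
      have := min_le_right (-(l:ℤ)*(M+1)) (x-1)
      omega
    have hbdd2 : ∃ ub : ℤ, ∀ z, (memB z ∧ z < x) → z ≤ ub := ⟨x, fun z hz => hz.2.le⟩
    exact Int.exists_greatest_of_bdd hbdd2 hinh2
  set f : ℕ → ℤ := fun n => Nat.rec htop.choose (fun _ prev => (hstep prev).choose) n with hf
  have hf0top : memB (f 0) ∧ ∀ z, memB z → z ≤ f 0 := htop.choose_spec
  have hfs : ∀ n : ℕ, (memB (f (n+1)) ∧ f (n+1) < f n) ∧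
      ∀ z, memB z ∧ z < f n → z ≤ f (n+1) := fun n => (hstep (f n)).choose_spec
  have hfmem : ∀ n, memB (f n) := by
    intro n; cases n with
    | zero => exact hf0top.1
    | succ k => exact (hfs k).1.1
  have hfdec : ∀ n, f (n+1) < f n := fun n => (hfs n).1.2
  have hfanti : StrictAnti f := strictAnti_nat_of_succ_lt hfdec
  -- everything above f n is one of f 0, ..., f (n-1) or f n itself
  have habove : ∀ n, ∀ z, memB z → f n < z → ∃ j, j < n ∧ z = f j := by
    intro n
    induction n with
    | zero => intro z hz h; exact absurd (hf0top.2 z hz) (by omega)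
    | succ k ih =>
      intro z hz h
      rcases lt_trichotomy z (f k) with h1 | h1 | h1
      · exact absurd ((hfs k).2 z ⟨hz, h1⟩) (by omega)
      · exact ⟨k, by omega, h1⟩
      · obtain ⟨j, hj, he⟩ := ih z hz h1
        exact ⟨j, by omega, he⟩
  -- lower bound f n ≥ -n-1
  have hfge : ∀ n : ℕ, -(n:ℤ) - 1 ≤ f n := by
    intro n
    by_contra hcon
    push_neg at hcon
    set M' : ℤ := M + n + 2 with hM'
    have hM'M : M ≤ M' := by omega
    have hT : (l:ℤ)*M' ≥ M' := by nlinarith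
    have hgecnt := hcnt_ge M' hM'M (-(n:ℤ)-1) (by omega) (by omega)
    -- but the filtered set injects into image f (range n)
    have hsub : (Finset.Ico (-(n:ℤ)-1) ((l:ℤ)*M')).filter memB ⊆
        (Finset.range n).image f := by
      intro z hz
      simp only [Finset.mem_filter, Finset.mem_Ico] at hz
      obtain ⟨⟨hz1, hz2⟩, hz3⟩ := hz
      obtain ⟨j, hj, he⟩ := habove n z hz3 (by omega)
      exact Finset.mem_image.mpr ⟨j, Finset.mem_range.mpr hj, he.symm⟩
    have hcard : ((Finset.Ico (-(n:ℤ)-1) ((l:ℤ)*M')).filter memB).card ≤ n := by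
      calc _ ≤ ((Finset.range n).image f).card := Finset.card_le_card hsub
        _ ≤ n := by rw [Finset.card_image_of_injective _ hfanti.injective]; simp
    have : (∑ b ∈ (Finset.Ico (-(n:ℤ)-1) ((l:ℤ)*M')).filter memB, (1:ℤ))
        = ((Finset.Ico (-(n:ℤ)-1) ((l:ℤ)*M')).filter memB).card := by
      rw [Finset.sum_const, nsmul_eq_mul, mul_one]
    omega
  -- eventually staircase
  set M2 : ℤ := M + 2 with hM2
  set n0 : ℕ := ((l:ℤ)*M2).toNat with hn0
  have hn0T : ((n0:ℤ)) = (l:ℤ)*M2 := by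
    have : (0:ℤ) ≤ (l:ℤ)*M2 := by positivity
    omega
  have hfn0 : f n0 = -(n0:ℤ) - 1 := by
    have h1 := hfge n0
    by_contra hne
    have h2 : -(n0:ℤ) ≤ f n0 := by omega
    -- then f 0, ..., f n0 are n0+1 distinct elements of the count-T' set
    have hsub : (Finset.range (n0+1)).image f ⊆
        (Finset.Ico (-((l:ℤ)*M2)) ((l:ℤ)*M2)).filter memB := by
      intro z hz
      simp only [Finset.mem_image, Finset.mem_range] at hz
      obtain ⟨j, hj, rfl⟩ := hz
      have hge : f n0 ≤ f j := hfanti.antitone (by omega)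
      have hhi := hhigh (f j) (hfmem j)
      have hMM2 : (l:ℤ)*M ≤ (l:ℤ)*M2 := by nlinarith
      simp only [Finset.mem_filter, Finset.mem_Ico]
      refine ⟨⟨by omega, by omega⟩, hfmem j⟩
    have hc1 : ((Finset.range (n0+1)).image f).card = n0 + 1 := by
      rw [Finset.card_image_of_injective _ hfanti.injective]; simp
    have hc2 := Finset.card_le_card hsub
    have hc3 : (∑ b ∈ (Finset.Ico (-((l:ℤ)*M2)) ((l:ℤ)*M2)).filter memB, (1:ℤ))
        = ((Finset.Ico (-((l:ℤ)*M2)) ((l:ℤ)*M2)).filter memB).card := by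
      rw [Finset.sum_const, nsmul_eq_mul, mul_one]
    have hc4 := hcnt M2 (by omega)
    rw [hc3] at hc4
    omega
  have hstair : ∀ n : ℕ, n0 ≤ n → f n = -(n:ℤ) - 1 := by
    intro n hn
    induction n, hn using Nat.le_induction with
    | base => exact hfn0
    | succ n hn ih =>
      have hcand : memB (-(n:ℤ) - 2) := by
        apply hlow
        have h3 : -(l:ℤ)*(M+1) = -((l:ℤ)*M2) + (l:ℤ) := by ring
        rw [h3, ← hn0T]
        omega
      have h1 : f (n+1) ≥ -(n:ℤ) - 2 := (hfs n).2 _ ⟨hcand, by rw [ih]; omega⟩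
      have h2 : f (n+1) < f n := hfdec n
      rw [ih] at h2
      push_cast
      omega
  -- build the partition
  set P : Partition' := Partition'.ofBeta f hfdec hfge ⟨n0, hstair⟩ with hP
  have hbeta : ∀ n, P.beta n = f n := fun n => Partition'.ofBeta_beta f hfdec hfge ⟨n0, hstair⟩ n
  have hfle : ∀ n : ℕ, f n ≤ f 0 - n := by
    intro n
    induction n with
    | zero => simp
    | succ k ih => have := hfdec k; push_cast; omega
  refine ⟨P, fun i hi q => ?_⟩
  constructor
  · rintro ⟨n, hn⟩
    rw [hbeta n] at hn
    exact (hclass i hi q).mp (hn ▸ hfmem n)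
  · intro hq
    have hb : memB ((l:ℤ)*q + i) := (hclass i hi q).mpr hq
    set b : ℤ := (l:ℤ)*q + i with hbdef
    have hn : ∃ n : ℕ, f n < b := by
      refine ⟨(f 0 - b + 1).toNat, ?_⟩
      have := hfle (f 0 - b + 1).toNat
      have hb0 := hf0top.2 b hb
      omega
    obtain ⟨n, hn⟩ := hn
    obtain ⟨j, _, he⟩ := habove n b hb hn
    exact ⟨j, by rw [hbeta j, ← he]⟩

end Aux6
section Aux7
open Finset

lemma adj_symm {x y : ℕ × ℕ} (h : Adj x y) : Adj y x := by
  unfold Adj at *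
  omega

lemma rtg_symm {H : Set (ℕ × ℕ)} {x y : ℕ × ℕ}
    (h : Relation.ReflTransGen (fun a b => a ∈ H ∧ b ∈ H ∧ Adj a b) x y) :
    Relation.ReflTransGen (fun a b => a ∈ H ∧ b ∈ H ∧ Adj a b) y x := by
  induction h with
  | refl => exact Relation.ReflTransGen.refl
  | tail _ step ih =>
    exact Relation.ReflTransGen.trans
      (Relation.ReflTransGen.single ⟨step.2.1, step.1, adj_symm step.2.2⟩) ih

lemma rtg_row_bound {H : Set (ℕ × ℕ)} {n : ℕ}
    (hcross : ∀ m : ℕ, ¬ ((m, n) ∈ H ∧ (m, n+1) ∈ H)) {x y : ℕ × ℕ}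
    (hpath : Relation.ReflTransGen (fun a b => a ∈ H ∧ b ∈ H ∧ Adj a b) x y)
    (hx : x.2 ≤ n) : y.2 ≤ n := by
  induction hpath with
  | refl => exact hx
  | tail _ step ih =>
    rename_i b c _
    obtain ⟨hbH, hcH, hadj⟩ := step
    by_contra hc
    push_neg at hc
    have hc2 : c.2 = n + 1 ∧ b.2 = n ∧ b.1 = c.1 := by
      unfold Adj at hadj
      omega
    apply hcross c.1
    have hb : (c.1, n) = b := by
      obtain ⟨h1, h2, h3⟩ := hc2
      exact Prod.ext h3.symm h2.symm
    have hcc : (c.1, n+1) = c := Prod.ext rfl hc2.1.symm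
    rw [hb, hcc]
    exact ⟨hbH, hcH⟩

lemma rtg_horiz {H : Set (ℕ × ℕ)} {n s : ℕ} :
    ∀ d : ℕ, ∀ m : ℕ, (m, n) ∈ H → m = s + d → (∀ j, s ≤ j → j ≤ m → (j, n) ∈ H) →
      Relation.ReflTransGen (fun a b => a ∈ H ∧ b ∈ H ∧ Adj a b) (m, n) (s, n) := by
  intro d
  induction d with
  | zero =>
    intro m _ he _
    rw [show m = s by omega]
  | succ d ih =>
    intro m hm he hall
    have hprev : (m - 1, n) ∈ H := hall (m-1) (by omega) (by omega)
    refine Relation.ReflTransGen.head ⟨hm, hprev, ?_⟩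
      (ih (m-1) hprev (by omega) (fun j h1 h2 => hall j h1 (by omega)))
    unfold Adj
    omega

/-- If the bead condition fails at row `a`, `P` has a rim hook of length `l`. -/
lemma rimHook_of_bead_fail (l : ℕ) (hl : 0 < l) (P : Partition') (a : ℕ)
    (hfail : ∀ m, P.beta m ≠ P.beta a - l) : ∃ H : Set (ℕ × ℕ), IsRimHook l P H := by
  classical
  have hl' : (0:ℤ) < l := by exact_mod_cast hl
  set k : ℤ := P.beta a with hk
  -- the greatest row with beta > k - l
  set bigN : ℕ := (P.beta 0 - (k - l)).toNat with hbigN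
  have hbound : ∀ n : ℕ, k - l < P.beta n → n ≤ bigN := by
    intro n hn
    have := P.beta_le n
    omega
  set b : ℕ := Nat.findGreatest (fun n => k - l < P.beta n) bigN with hb
  have hPa : k - l < P.beta a := by omega
  have haN : a ≤ bigN := hbound a hPa
  have hb1 : k - l < P.beta b := by
    have := Nat.findGreatest_spec (P := fun n => k - l < P.beta n) haN hPa
    simpa [← hb] using this
  have hab : a ≤ b := by
    have := Nat.le_findGreatest (P := fun n => k - l < P.beta n) haN hPa
    simpa [← hb] using this
  have hb2 : P.beta (b+1) < k - l := by
    have hnot : ¬ (k - l < P.beta (b+1)) := by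
      rcases le_or_gt (b+1) bigN with hle | hlt
      · have := Nat.findGreatest_is_greatest (P := fun n => k - l < P.beta n)
          (k := b+1) (by omega) hle
        simpa using this
      · intro hcon
        exact absurd (hbound _ hcon) (by omega)
    have := hfail (b+1)
    omega
  have hklb : -(b:ℤ) - 1 ≤ k - l := by
    have := P.beta_ge (b+1)
    push_cast at this ⊢
    omega
  -- the new beta sequence
  set f : ℕ → ℤ := fun n => if n < a then P.beta n else if n < b then P.beta (n+1)
    else if n = b then k - l else P.beta n with hf
  have hfa : ∀ n, n < a → f n = P.beta n := by
    intro n h; simp only [hf, if_pos h]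
  have hfm : ∀ n, a ≤ n → n < b → f n = P.beta (n+1) := by
    intro n h1 h2; simp only [hf, if_neg (by omega : ¬ n < a), if_pos h2]
  have hfb : f b = k - l := by
    simp only [hf]
    rw [if_neg (by omega : ¬ b < a), if_neg (by omega : ¬ b < b)]
    simp
  have hfc : ∀ n, b < n → f n = P.beta n := by
    intro n h
    simp only [hf, if_neg (by omega : ¬ n < a), if_neg (by omega : ¬ n < b),
      if_neg (by omega : ¬ n = b)]
  have hfle : ∀ n, f n ≤ P.beta n := by
    intro n
    rcases lt_or_ge n a with h | h
    · rw [hfa n h]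
    · rcases lt_or_ge n b with h2 | h2
      · rw [hfm n h h2]; exact (P.beta_succ_lt n).le
      · rcases eq_or_lt_of_le h2 with h3 | h3
        · rw [← h3, hfb]
          have := P.beta_anti hab
          omega
        · rw [hfc n h3]
  have hfltmid : ∀ n, a ≤ n → n ≤ b → f n < P.beta n := by
    intro n h1 h2
    rcases lt_or_ge n b with h3 | h3
    · rw [hfm n h1 h3]; exact P.beta_succ_lt n
    · have h4 : n = b := by omega
      subst h4
      rw [hfb]
      have := P.beta_anti hab
      omega
  have hdec : ∀ n, f (n+1) < f n := by
    intro n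
    rcases lt_or_ge (n+1) a with h | h
    · rw [hfa n (by omega), hfa (n+1) h]; exact P.beta_succ_lt n
    · rcases lt_or_ge (n+1) b with h2 | h2
      · rw [hfm (n+1) h h2]
        rcases lt_or_ge n a with h3 | h3
        · rw [hfa n h3]
          have g1 := P.beta_succ_lt (n+1)
          have g2 := P.beta_succ_lt n
          omega
        · rw [hfm n h3 (by omega)]; exact P.beta_succ_lt (n+1)
      · rcases eq_or_lt_of_le h2 with h3 | h3
        · have e1 : f (n+1) = k - l := by rw [← h3]; exact hfb
          rw [e1]
          rcases lt_or_ge n a with h4 | h4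
          · rw [hfa n h4]
            have : P.beta a ≤ P.beta n := P.beta_anti (by omega)
            omega
          · rw [hfm n h4 (by omega)]
            have e2 : P.beta (n+1) = P.beta b := by rw [h3]
            omega
        · rw [hfc (n+1) (by omega)]
          rcases eq_or_lt_of_le (show b ≤ n by omega) with h4 | h4
          · have e1 : f n = k - l := by rw [← h4]; exact hfb
            have e2 : P.beta (n+1) = P.beta (b+1) := by rw [h4]
            rw [e1]
            omega
          · rw [hfc n h4]; exact P.beta_succ_lt n
  have hge : ∀ n : ℕ, -(n:ℤ) - 1 ≤ f n := by
    intro n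
    rcases lt_or_ge n a with h | h
    · rw [hfa n h]; exact P.beta_ge n
    · rcases lt_or_ge n b with h2 | h2
      · rw [hfm n h h2]
        have hgap := P.beta_le' (n+1) b (by omega)
        push_cast at hgap ⊢
        omega
      · rcases eq_or_lt_of_le (show b ≤ n from h2) with h3 | h3
        · have e1 : f n = k - l := by rw [← h3]; exact hfb
          have e2 : (b:ℤ) = (n:ℤ) := by rw [h3]
          rw [e1]
          omega
        · rw [hfc n h3]; exact P.beta_ge n
  have hev : ∃ N : ℕ, ∀ n ≥ N, f n = -(n:ℤ) - 1 := by
    obtain ⟨N, hN⟩ := P.exists_beta_bound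
    exact ⟨max N (b+1), fun n hn => by
      rw [hfc n (by omega)]
      exact hN n (by omega)⟩
  set μ : Partition' := Partition'.ofBeta f hdec hge hev with hμ
  have hbmu : ∀ n, μ.beta n = f n := fun n => Partition'.ofBeta_beta f hdec hge hev n
  have hmp : ∀ n : ℕ, (μ.parts n : ℤ) = f n + n + 1 := by
    intro n
    rw [μ.parts_eq_beta n, hbmu n]
    have := hge n
    omega
  have hpp : ∀ n : ℕ, (P.parts n : ℤ) = P.beta n + n + 1 := by
    intro n
    rw [P.parts_eq_beta n]
    have := P.beta_ge n
    omega
  have hple : ∀ n, μ.parts n ≤ P.parts n := by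
    intro n
    have h1 := hmp n; have h2 := hpp n; have := hfle n
    omega
  have hsubcells : μ.cells ⊆ P.cells := by
    rintro ⟨m, n⟩ hc
    have : m < μ.parts n := hc
    exact show m < P.parts n by have := hple n; omega
  set H : Set (ℕ × ℕ) := P.cells \ μ.cells with hH
  have hmemH : ∀ m n : ℕ, ((m, n) ∈ H ↔ μ.parts n ≤ m ∧ m < P.parts n) := by
    intro m n
    constructor
    · rintro ⟨h1, h2⟩
      exact ⟨by simpa [Partition'.cells] using h2, h1⟩
    · rintro ⟨h1, h2⟩
      exact ⟨h2, by simpa [Partition'.cells] using h1⟩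
  have hrow_range : ∀ m n : ℕ, (m, n) ∈ H → a ≤ n ∧ n ≤ b := by
    intro m n hmn
    rw [hmemH m n] at hmn
    by_contra hcon
    have : f n = P.beta n := by
      rcases lt_or_ge n a with h | h
      · exact hfa n h
      · exact hfc n (by omega)
    have h1 := hmp n; have h2 := hpp n
    omega
  have hrow_ne : ∀ n, a ≤ n → n ≤ b → μ.parts n < P.parts n := by
    intro n h1 h2
    have := hfltmid n h1 h2
    have h3 := hmp n; have h4 := hpp n
    omega
  -- finset representation
  set Hf : Finset (ℕ × ℕ) := (Finset.range (b+1)).biUnion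
    (fun n => (Finset.Ico (μ.parts n) (P.parts n)).image (fun m => (m, n))) with hHfdef
  have hHf : H = ↑Hf := by
    ext ⟨m, n⟩
    simp only [hHfdef, Finset.coe_biUnion, Set.mem_iUnion, Finset.mem_coe, Finset.mem_biUnion,
      Finset.mem_range, Finset.mem_image, Finset.mem_Ico]
    constructor
    · intro hmn
      have hr := hrow_range m n hmn
      rw [hmemH m n] at hmn
      exact ⟨n, by omega, m, hmn, rfl⟩
    · rintro ⟨n', _, m', hm', he⟩
      cases he
      exact (hmemH m n).mpr hm'
  have hfin : H.Finite := by rw [hHf]; exact Hf.finite_toSet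
  -- cardinality
  have hcardsum : Hf.card = ∑ n ∈ Finset.range (b+1), (P.parts n - μ.parts n) := by
    rw [hHfdef, Finset.card_biUnion]
    · refine Finset.sum_congr rfl (fun n _ => ?_)
      rw [Finset.card_image_of_injective _ (fun x y h => by injection h), Nat.card_Ico]
    · intro i _ j _ hij
      apply Finset.disjoint_left.mpr
      rintro ⟨m, n⟩ h1 h2
      simp only [Finset.mem_image] at h1 h2
      obtain ⟨_, _, he1⟩ := h1
      obtain ⟨_, _, he2⟩ := h2
      cases he1
      injection he2 with _ h
      exact hij h.symm
  have htel : ∀ b' : ℕ, a ≤ b' →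
      ∑ n ∈ Finset.Ico a b', (P.beta n - P.beta (n+1)) = P.beta a - P.beta b' := by
    intro b' hb'
    induction b', hb' using Nat.le_induction with
    | base => simp
    | succ b' hb' ih =>
      rw [Finset.sum_Ico_succ_top hb', ih]
      ring
  have hcard : H.ncard = l := by
    rw [hHf, Set.ncard_coe_finset]
    have hz : (Hf.card : ℤ) = ∑ n ∈ Finset.range (b+1), (P.beta n - f n) := by
      rw [hcardsum]
      push_cast [hple]
      refine Finset.sum_congr rfl (fun n _ => ?_)
      have h1 := hmp n; have h2 := hpp n
      omega
    rw [Finset.range_eq_Ico, ← Finset.sum_Ico_consecutive _ (Nat.zero_le a) (by omega : a ≤ b+1)]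
      at hz
    have hzero : ∑ n ∈ Finset.Ico 0 a, (P.beta n - f n) = 0 := by
      refine Finset.sum_eq_zero (fun n hn => ?_)
      rw [hfa n (Finset.mem_Ico.mp hn).2]
      ring
    rw [hzero, zero_add, Finset.sum_Ico_succ_top hab, hfb] at hz
    have hmid : ∑ n ∈ Finset.Ico a b, (P.beta n - f n)
        = ∑ n ∈ Finset.Ico a b, (P.beta n - P.beta (n+1)) := by
      refine Finset.sum_congr rfl (fun n hn => ?_)
      have := Finset.mem_Ico.mp hn
      rw [hfm n this.1 this.2]
    rw [hmid, htel b hab] at hz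
    omega
  -- connectivity
  have hwalkrow : ∀ n m : ℕ, (m, n) ∈ H →
      Relation.ReflTransGen (fun x y => x ∈ H ∧ y ∈ H ∧ Adj x y) (m, n) (μ.parts n, n) := by
    intro n m hmn
    have h1 := (hmemH m n).mp hmn
    refine rtg_horiz (m - μ.parts n) m hmn (by omega) (fun j hj1 hj2 => ?_)
    exact (hmemH j n).mpr ⟨hj1, by omega⟩
  have hdown : ∀ n, a ≤ n → n < b →
      Relation.ReflTransGen (fun x y => x ∈ H ∧ y ∈ H ∧ Adj x y)
        (μ.parts n, n) (μ.parts (n+1), n+1) := by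
    intro n h1 h2
    have hcorner : (μ.parts n, n) ∈ H :=
      (hmemH _ n).mpr ⟨le_refl _, hrow_ne n h1 (by omega)⟩
    have hnext : (μ.parts n, n+1) ∈ H := by
      refine (hmemH _ (n+1)).mpr ⟨μ.antitone (by omega), ?_⟩
      have h3 := hmp n; have h4 := hpp (n+1)
      have h5 := hfm n h1 h2
      omega
    refine Relation.ReflTransGen.head ⟨hcorner, hnext, ?_⟩ (hwalkrow (n+1) _ hnext)
    unfold Adj
    omega
  have htob : ∀ j n, a ≤ n → n + j = b →
      Relation.ReflTransGen (fun x y => x ∈ H ∧ y ∈ H ∧ Adj x y)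
        (μ.parts n, n) (μ.parts b, b) := by
    intro j
    induction j with
    | zero => intro n h1 h2; rw [show n = b by omega]
    | succ j ih =>
      intro n h1 h2
      exact Relation.ReflTransGen.trans (hdown n h1 (by omega))
        (ih (n+1) (by omega) (by omega))
  have hconn : ConnectedIn H := by
    rintro ⟨mx, nx⟩ hx ⟨my, ny⟩ hy
    have hrx := hrow_range mx nx hx
    have hry := hrow_range my ny hy
    have px := Relation.ReflTransGen.trans (hwalkrow nx mx hx)
      (htob (b - nx) nx hrx.1 (by omega))
    have py := Relation.ReflTransGen.trans (hwalkrow ny my hy)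
      (htob (b - ny) ny hry.1 (by omega))
    exact Relation.ReflTransGen.trans px (rtg_symm py)
  -- no square
  have hnosq : ¬ HasSquare H := by
    rintro ⟨m, n, h1, h2, h3, h4⟩
    have hr1 := hrow_range m n h1
    have hr3 := hrow_range m (n+1) h3
    have hm1 := (hmemH m n).mp h1
    have hm3 := (hmemH m (n+1)).mp h3
    have hm4 := (hmemH (m+1) (n+1)).mp h4
    have h5 := hfm n hr1.1 (by omega)
    have h6 := hmp n; have h7 := hpp (n+1)
    omega
  refine ⟨H, Set.diff_subset, hfin, hcard, hconn, hnosq, μ, ?_⟩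
  rw [hH, Set.diff_diff_cancel_left hsubcells]

end Aux7
section Aux7b
open Finset

lemma telescope_sum (g : ℕ → ℤ) (a : ℕ) : ∀ b' : ℕ, a ≤ b' →
    ∑ n ∈ Finset.Ico a b', (g n - g (n+1)) = g a - g b' := by
  intro b' hb'
  induction b', hb' using Nat.le_induction with
  | base => simp
  | succ b' hb' ih => rw [Finset.sum_Ico_succ_top hb', ih]; ring

lemma bead_fail_of_rimHook (l : ℕ) (hl : 0 < l) (P : Partition') (H : Set (ℕ × ℕ))
    (hRH : IsRimHook l P H) : ∃ a : ℕ, ∀ m, P.beta m ≠ P.beta a - l := by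
  classical
  obtain ⟨hsub, hfin, hcard, hconn, hnosq, μ, hμ⟩ := hRH
  have hpp : ∀ n : ℕ, (P.parts n : ℤ) = P.beta n + n + 1 := by
    intro n
    rw [P.parts_eq_beta n]
    have := P.beta_ge n
    omega
  have hmpp : ∀ n : ℕ, (μ.parts n : ℤ) = μ.beta n + n + 1 := by
    intro n
    rw [μ.parts_eq_beta n]
    have := μ.beta_ge n
    omega
  have hple : ∀ n, μ.parts n ≤ P.parts n := by
    intro n
    by_contra hcon
    push_neg at hcon
    have hmem : ((P.parts n : ℕ), n) ∈ μ.cells := show P.parts n < μ.parts n from hcon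
    rw [hμ] at hmem
    have h2 : P.parts n < P.parts n := hmem.1
    omega
  have hmemH : ∀ m n : ℕ, ((m, n) ∈ H ↔ μ.parts n ≤ m ∧ m < P.parts n) := by
    intro m n
    constructor
    · intro hmn
      have h1 : m < P.parts n := hsub hmn
      have h2 : ¬ m < μ.parts n := by
        intro hcon
        have hmem : (m, n) ∈ μ.cells := hcon
        rw [hμ] at hmem
        exact hmem.2 hmn
      exact ⟨by omega, h1⟩
    · rintro ⟨h1, h2⟩
      by_contra hno
      have hmem : (m, n) ∈ μ.cells := by
        rw [hμ]
        exact ⟨h2, hno⟩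
      have h3 : m < μ.parts n := hmem
      omega
  have hne : H.Nonempty := Set.nonempty_of_ncard_ne_zero (by omega)
  set R : Set ℕ := {n | μ.parts n < P.parts n} with hR
  have hRfin : R.Finite := by
    apply Set.Finite.subset (hfin.image Prod.snd)
    intro n hn
    exact ⟨(μ.parts n, n), (hmemH _ n).mpr ⟨le_refl _, hn⟩, rfl⟩
  obtain ⟨⟨m0, n0⟩, h0⟩ := hne
  have hn0 : n0 ∈ R := by
    have := (hmemH m0 n0).mp h0
    exact show μ.parts n0 < P.parts n0 by omega
  set Rf : Finset ℕ := hRfin.toFinset with hRfdef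
  have hRfne : Rf.Nonempty := ⟨n0, hRfin.mem_toFinset.mpr hn0⟩
  set a : ℕ := Rf.min' hRfne with hadef
  set b : ℕ := Rf.max' hRfne with hbdef
  have hmemRf : ∀ n, n ∈ Rf ↔ μ.parts n < P.parts n := fun n => hRfin.mem_toFinset
  have ha : μ.parts a < P.parts a := (hmemRf a).mp (Rf.min'_mem hRfne)
  have hb : μ.parts b < P.parts b := (hmemRf b).mp (Rf.max'_mem hRfne)
  have hab : a ≤ b := Rf.min'_le b ((hmemRf b).mpr hb)
  have houtside : ∀ n, (n < a ∨ b < n) → μ.parts n = P.parts n := by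
    intro n hn
    have hnot : n ∉ Rf := by
      intro hmem
      have h1 := Rf.min'_le n hmem
      have h2 := Rf.le_max' n hmem
      omega
    have h4 : ¬ μ.parts n < P.parts n := fun hc => hnot ((hmemRf n).mpr hc)
    have h3 := hple n
    omega
  have hxa : (μ.parts a, a) ∈ H := (hmemH _ a).mpr ⟨le_refl _, ha⟩
  have hxb : (μ.parts b, b) ∈ H := (hmemH _ b).mpr ⟨le_refl _, hb⟩
  have hpath := hconn (μ.parts a, a) hxa (μ.parts b, b) hxb
  have hcontig : ∀ n, a ≤ n → n ≤ b → μ.parts n < P.parts n := by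
    intro n h1 h2
    by_contra hcon
    have hrow_empty : ∀ m : ℕ, (m, n) ∉ H := by
      intro m hm
      have := (hmemH m n).mp hm
      omega
    have hna : a < n := by
      rcases eq_or_lt_of_le h1 with h | h
      · rw [← h] at hcon; omega
      · exact h
    have hn1 : n - 1 + 1 = n := by omega
    have hcross : ∀ m : ℕ, ¬ ((m, n-1) ∈ H ∧ (m, n-1+1) ∈ H) := by
      rintro m ⟨_, hm2⟩
      rw [hn1] at hm2
      exact hrow_empty m hm2
    have hbound := rtg_row_bound hcross hpath (show a ≤ n - 1 by omega)
    have hbb : b ≤ n - 1 := hbound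
    omega
  have hstep : ∀ n, a ≤ n → n < b → (μ.parts n : ℤ) = (P.parts (n+1) : ℤ) - 1 := by
    intro n h1 h2
    have hrow1 := hcontig n h1 (by omega)
    have hrow2 := hcontig (n+1) (by omega) (by omega)
    have hup : μ.parts n < P.parts (n+1) := by
      by_contra hcon
      push_neg at hcon
      have hcross : ∀ m : ℕ, ¬ ((m, n) ∈ H ∧ (m, n+1) ∈ H) := by
        rintro m ⟨hm1, hm2⟩
        have g1 := (hmemH m n).mp hm1
        have g2 := (hmemH m (n+1)).mp hm2
        have g3 := μ.antitone (show n ≤ n+1 by omega)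
        omega
      have hbound := rtg_row_bound hcross hpath (show a ≤ n from h1)
      have hbb : b ≤ n := hbound
      omega
    have hdown : P.parts (n+1) ≤ μ.parts n + 1 := by
      by_contra hcon
      push_neg at hcon
      apply hnosq
      have hPanti := P.antitone (show n ≤ n+1 by omega)
      have hmanti := μ.antitone (show n ≤ n+1 by omega)
      refine ⟨μ.parts n, n, ?_, ?_, ?_, ?_⟩
      · exact (hmemH _ n).mpr ⟨le_refl _, hrow1⟩
      · exact (hmemH _ n).mpr ⟨by omega, by omega⟩
      · exact (hmemH _ (n+1)).mpr ⟨by omega, by omega⟩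
      · exact (hmemH _ (n+1)).mpr ⟨by omega, by omega⟩
    omega
  -- cardinality and telescoping
  set Hf : Finset (ℕ × ℕ) := (Finset.range (b+1)).biUnion
    (fun n => (Finset.Ico (μ.parts n) (P.parts n)).image (fun m => (m, n))) with hHfdef
  have hHfeq : H = ↑Hf := by
    ext ⟨m, n⟩
    simp only [hHfdef, Finset.coe_biUnion, Set.mem_iUnion, Finset.mem_coe, Finset.mem_biUnion,
      Finset.mem_range, Finset.mem_image, Finset.mem_Ico]
    constructor
    · intro hmn
      have h1 := (hmemH m n).mp hmn
      have h2 : n ∈ Rf := (hmemRf n).mpr (by omega)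
      have h3 := Rf.le_max' n h2
      exact ⟨n, by omega, m, h1, rfl⟩
    · rintro ⟨n', _, m', hm', he⟩
      cases he
      exact (hmemH m n).mpr hm'
  have hcardsum : Hf.card = ∑ n ∈ Finset.range (b+1), (P.parts n - μ.parts n) := by
    rw [hHfdef, Finset.card_biUnion]
    · refine Finset.sum_congr rfl (fun n _ => ?_)
      rw [Finset.card_image_of_injective _ (fun x y h => by injection h), Nat.card_Ico]
    · intro i _ j _ hij
      apply Finset.disjoint_left.mpr
      rintro ⟨m, n⟩ h1 h2
      simp only [Finset.mem_image] at h1 h2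
      obtain ⟨_, _, he1⟩ := h1
      obtain ⟨_, _, he2⟩ := h2
      cases he1
      injection he2 with _ h
      exact hij h.symm
  have hlsum : (l : ℤ) = ∑ n ∈ Finset.range (b+1), (P.beta n - μ.beta n) := by
    have h1 : H.ncard = Hf.card := by rw [hHfeq, Set.ncard_coe_finset]
    rw [← hcard, h1, hcardsum]
    push_cast [hple]
    refine Finset.sum_congr rfl (fun n _ => ?_)
    have g1 := hpp n; have g2 := hmpp n
    omega
  have hmubb : μ.beta b = P.beta a - l := by
    rw [Finset.range_eq_Ico,
      ← Finset.sum_Ico_consecutive _ (Nat.zero_le a) (by omega : a ≤ b+1)] at hlsum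
    have hzero : ∑ n ∈ Finset.Ico 0 a, (P.beta n - μ.beta n) = 0 := by
      refine Finset.sum_eq_zero (fun n hn => ?_)
      have h1 := houtside n (Or.inl (Finset.mem_Ico.mp hn).2)
      have g1 := hpp n; have g2 := hmpp n
      omega
    rw [hzero, zero_add, Finset.sum_Ico_succ_top hab] at hlsum
    have hmid : ∑ n ∈ Finset.Ico a b, (P.beta n - μ.beta n)
        = ∑ n ∈ Finset.Ico a b, (P.beta n - P.beta (n+1)) := by
      refine Finset.sum_congr rfl (fun n hn => ?_)
      have hn' := Finset.mem_Ico.mp hn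
      have h1 := hstep n hn'.1 hn'.2
      have g1 := hpp (n+1); have g2 := hmpp n
      omega
    rw [hmid, telescope_sum P.beta a b hab] at hlsum
    omega
  refine ⟨a, fun m hm => ?_⟩
  rw [← hmubb] at hm
  have h1 : μ.beta b < P.beta b := by
    have g1 := hpp b; have g2 := hmpp b
    omega
  have h2 : P.beta (b+1) < μ.beta b := by
    have h3 := houtside (b+1) (Or.inr (by omega))
    have h4 := μ.beta_succ_lt b
    have g1 := hpp (b+1); have g2 := hmpp (b+1)
    omega
  rcases le_or_gt m b with h3 | h3
  · have := P.beta_anti h3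
    omega
  · have := P.beta_anti (show b+1 ≤ m by omega)
    omega

lemma isLCore_iff_bead (l : ℕ) (hl : 0 < l) (P : Partition') :
    IsLCore l P ↔ ∀ n, ∃ m, P.beta m = P.beta n - l := by
  constructor
  · intro hcore n
    by_contra h
    push_neg at h
    exact hcore (rimHook_of_bead_fail l hl P n h)
  · rintro hbead ⟨H, hH⟩
    obtain ⟨a, hfail⟩ := bead_fail_of_rimHook l hl P H hH
    obtain ⟨m, hm⟩ := hbead a
    exact hfail m hm

end Aux7b
section Aux8
open Finset

def trivPartition : Partition' :=
  ⟨fun _ => 0, fun _ _ _ => le_refl 0, ⟨0, fun _ _ => rfl⟩⟩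

lemma consec_bound (x : ℤ) :
    0 ≤ x * (x + 1) ∧ 2 ∣ x * (x + 1) ∧ 2 * (|x| - 1) ≤ x * (x + 1) := by
  refine ⟨?_, ?_, ?_⟩
  · rcases le_or_gt 0 x with h | h
    · exact mul_nonneg h (by omega)
    · have h1 : x ≤ -1 := by omega
      nlinarith
  · obtain ⟨c, hc⟩ := Int.even_mul_succ_self x
    exact ⟨c, by omega⟩
  · rcases abs_cases x with ⟨h1, h2⟩ | ⟨h1, h2⟩
    · rw [h1]; nlinarith [sq_nonneg (x-1)]
    · rw [h1]
      rcases le_or_gt x (-2) with h3 | h3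
      · nlinarith [mul_nonneg (by omega : (0:ℤ) ≤ -(x+1)) (by omega : (0:ℤ) ≤ -(x+2))]
      · have hx : x = -1 := by omega
        rw [hx]; norm_num

lemma term_bound (x ε : ℤ) (hε : ε = 1 ∨ ε = -1) :
    0 ≤ x * (x + ε) ∧ 2 ∣ x * (x + ε) ∧ 2 * (|x| - 1) ≤ x * (x + ε) := by
  rcases hε with rfl | rfl
  · exact consec_bound x
  · have h := consec_bound (-x)
    have he : -x * (-x + 1) = x * (x + -1) := by ring
    rw [he, abs_neg] at h
    exact h

lemma hasParams_congr (l : ℕ) (P : Partition') (p p' : ℕ → ℤ)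
    (hpp : ∀ i < l, p i = p' i) (h : HasParams l P p) : HasParams l P p' := by
  intro i hi q
  rw [← hpp i hi]
  exact h i hi q

end Aux8
/-- For every `l ≥ 2` and residue `0 ≤ r ≤ l−1`, the identity of formal
power series `∑_{λ an l-core} q^{∑_k N_{kl−r}(λ)} = ∑_{∑ p_i = 0} q^{(1/2)∑ p_i² + ∑_{i=l−r}^{l−1} p_i}`
holds: all exponents on the right are nonnegative integers, and for every `N ≥ 0` the
(finite) number of `l`-cores `λ` with `∑_k N_{kl−r}(λ) = N` equals the (finite) number of
integer vectors `(p_i)` with `∑ p_i = 0` and `(1/2)∑ p_i² + ∑_{i=l−r}^{l−1} p_i = N`. -/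
theorem lcore_theta_function (l : ℕ) (hl : 2 ≤ l) (r : ℕ) (hr : r < l) :
    (∀ p : Fin l → ℤ, ∑ i, p i = 0 →
      ∃ N : ℕ, (N : ℚ) = (∑ i, (p i : ℚ) ^ 2) / 2
        + ∑ i ∈ Finset.univ.filter (fun i : Fin l => l - r ≤ (i : ℕ)), (p i : ℚ)) ∧
    (∀ N : ℕ,
      {c : Partition' | IsLCore l c ∧ contentCount l c (-(r : ℤ)) = N}.Finite ∧
      {p : Fin l → ℤ | ∑ i, p i = 0 ∧ (∑ i, (p i : ℚ) ^ 2) / 2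
        + ∑ i ∈ Finset.univ.filter (fun i : Fin l => l - r ≤ (i : ℕ)), (p i : ℚ)
          = (N : ℚ)}.Finite ∧
      {c : Partition' | IsLCore l c ∧ contentCount l c (-(r : ℤ)) = N}.ncard =
        {p : Fin l → ℤ | ∑ i, p i = 0 ∧ (∑ i, (p i : ℚ) ^ 2) / 2
          + ∑ i ∈ Finset.univ.filter (fun i : Fin l => l - r ≤ (i : ℕ)), (p i : ℚ)
            = (N : ℚ)}.ncard) := by
  
  classical
  have hl0 : 0 < l := by omega
  -- notation
  set F : Finset (Fin l) := Finset.univ.filter (fun i : Fin l => l - r ≤ (i : ℕ)) with hF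
  set pf : (Fin l → ℤ) → ℕ → ℤ := fun p i => if h : i < l then p ⟨i, h⟩ else 0 with hpfdef
  have hpf : ∀ (p : Fin l → ℤ) (i : Fin l), pf p (i : ℕ) = p i := by
    intro p i
    simp [hpfdef, i.isLt]
  have hsum_conv : ∀ p : Fin l → ℤ, ∑ i ∈ Finset.range l, pf p i = ∑ i, p i := by
    intro p
    rw [← Fin.sum_univ_eq_sum_range (pf p) l]
    exact Finset.sum_congr rfl (fun i _ => hpf p i)
  have hsq_conv : ∀ p : Fin l → ℤ,
      ∑ i ∈ Finset.range l, (pf p i)^2 = ∑ i, (p i)^2 := by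
    intro p
    rw [← Fin.sum_univ_eq_sum_range (fun i => (pf p i)^2) l]
    exact Finset.sum_congr rfl (fun i _ => by rw [hpf p i])
  have hfil_conv : ∀ p : Fin l → ℤ,
      ∑ i ∈ (Finset.range l).filter (fun i => l ≤ i + r), pf p i = ∑ i ∈ F, p i := by
    intro p
    rw [hF, Finset.sum_filter, Finset.sum_filter,
      ← Fin.sum_univ_eq_sum_range (fun i => if l ≤ i + r then pf p i else 0) l]
    refine Finset.sum_congr rfl (fun i _ => ?_)
    by_cases h1 : l ≤ (i:ℕ) + r
    · rw [if_pos h1, if_pos (by omega), hpf p i]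
    · rw [if_neg h1, if_neg (by omega)]
  -- the ℤ-valued weight identity
  have hEQ : ∀ (p : Fin l → ℤ) (n : ℕ), (∑ i, p i = 0) →
      (((∑ i, (p i : ℚ) ^ 2) / 2 + ∑ i ∈ F, (p i : ℚ) = (n : ℚ)) ↔
        (∑ i, (p i)^2) + 2 * ∑ i ∈ F, p i = 2 * (n:ℤ)) := by
    intro p n _
    have cast_eq : (((∑ i, (p i)^2 + 2 * ∑ i ∈ F, p i : ℤ)) : ℚ)
        = ∑ i, (p i:ℚ)^2 + 2 * ∑ i ∈ F, (p i:ℚ) := by push_cast; ring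
    constructor
    · intro h
      have h2 : ∑ i, (p i:ℚ)^2 + 2 * ∑ i ∈ F, (p i:ℚ) = 2*(n:ℚ) := by linarith
      have h3 : (((∑ i, (p i)^2 + 2 * ∑ i ∈ F, p i : ℤ)) : ℚ) = ((2*(n:ℤ) : ℤ) : ℚ) := by
        rw [cast_eq, h2]; push_cast; ring
      exact_mod_cast h3
    · intro h
      have h2 := congrArg (fun z : ℤ => (z : ℚ)) h
      rw [cast_eq] at h2
      push_cast at h2
      linarith
  -- weight decomposition with signs
  have hwz : ∀ p : Fin l → ℤ, (∑ i, p i = 0) →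
      ∑ i, (p i) * (p i + (if l - r ≤ (i:ℕ) then 1 else -1))
        = (∑ i, (p i)^2) + 2 * ∑ i ∈ F, p i := by
    intro p hp
    have hterm : ∀ i ∈ Finset.univ, (p i) * (p i + (if l - r ≤ (i:ℕ) then 1 else -1))
        = (p i)^2 + (if l - r ≤ (i:ℕ) then p i else -(p i)) := by
      intro i _
      split_ifs <;> ring
    rw [Finset.sum_congr rfl hterm, Finset.sum_add_distrib, Finset.sum_ite]
    have hsplit := Finset.sum_filter_add_sum_filter_not Finset.univ
      (fun i : Fin l => l - r ≤ (i:ℕ)) p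
    rw [Finset.sum_neg_distrib]
    rw [hF]
    linarith
  have htb : ∀ (p : Fin l → ℤ) (i : Fin l),
      0 ≤ (p i) * (p i + (if l - r ≤ (i:ℕ) then 1 else -1)) ∧
      2 ∣ (p i) * (p i + (if l - r ≤ (i:ℕ) then 1 else -1)) ∧
      2 * (|p i| - 1) ≤ (p i) * (p i + (if l - r ≤ (i:ℕ) then 1 else -1)) := by
    intro p i
    exact term_bound (p i) _ (by split_ifs <;> simp)
  constructor
  · -- part 1
    intro p hp
    set w : ℤ := ∑ i, (p i) * (p i + (if l - r ≤ (i:ℕ) then 1 else -1)) with hw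
    have hw0 : 0 ≤ w := Finset.sum_nonneg (fun i _ => (htb p i).1)
    have hdvd : 2 ∣ w := Finset.dvd_sum (fun i _ => (htb p i).2.1)
    obtain ⟨t, ht⟩ := hdvd
    have ht0 : 0 ≤ t := by omega
    refine ⟨t.toNat, ?_⟩
    have hwz2 := hwz p hp
    rw [← hw] at hwz2
    have hcast : ((w:ℤ) : ℚ) = ∑ i, (p i:ℚ)^2 + 2 * ∑ i ∈ F, (p i:ℚ) := by
      rw [hwz2]; push_cast; ring
    have htq : ((t.toNat : ℕ) : ℚ) = (t : ℚ) := by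
      have : ((t.toNat : ℕ) : ℤ) = t := by omega
      exact_mod_cast this
    have hwq : (w : ℚ) = 2 * (t:ℚ) := by exact_mod_cast ht
    rw [htq]
    rw [hwq] at hcast
    rw [hF] at hcast ⊢
    linarith
  · intro N
    set S : Set Partition' := {c | IsLCore l c ∧ contentCount l c (-(r:ℤ)) = N} with hS
    set T : Set (Fin l → ℤ) := {p | ∑ i, p i = 0 ∧ (∑ i, (p i : ℚ) ^ 2) / 2
      + ∑ i ∈ Finset.univ.filter (fun i : Fin l => l - r ≤ (i : ℕ)), (p i : ℚ)
        = (N : ℚ)} with hT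
    have hTmem : ∀ p : Fin l → ℤ, p ∈ T ↔ (∑ i, p i = 0 ∧
        (∑ i, (p i)^2) + 2 * ∑ i ∈ F, p i = 2 * (N:ℤ)) := by
      intro p
      constructor
      · rintro ⟨h1, h2⟩
        exact ⟨h1, (hEQ p N h1).mp (by rw [← hF] at h2; exact h2)⟩
      · rintro ⟨h1, h2⟩
        refine ⟨h1, ?_⟩
        have := (hEQ p N h1).mpr h2
        rw [← hF]
        exact this
    -- the map
    set Psi : (Fin l → ℤ) → Partition' := fun p =>
      if h : ∃ P : Partition', HasParams l P (pf p) then h.choose else trivPartition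
      with hPsi
    have hPsiSpec : ∀ p : Fin l → ℤ, (∑ i, p i = 0) → HasParams l (Psi p) (pf p) := by
      intro p hp
      have hex : ∃ P : Partition', HasParams l P (pf p) :=
        exists_partition_of_params l hl0 (pf p) (by rw [hsum_conv p]; exact hp)
      rw [hPsi]
      simp only [dif_pos hex]
      exact hex.choose_spec
    have hcontent : ∀ (c : Partition') (p : Fin l → ℤ), HasParams l c (pf p) →
        2 * (contentCount l c (-(r:ℤ)) : ℤ)
          = (∑ i, (p i)^2) + 2 * ∑ i ∈ F, p i := by
      intro c p h
      rw [← hsq_conv p, ← hfil_conv p]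
      exact hasParams_content l hl0 r hr c (pf p) h
    have hSimg : S = Psi '' T := by
      ext c
      constructor
      · rintro ⟨hcore, hcc⟩
        obtain ⟨p0, hp0⟩ := exists_params l hl0 c
          ((isLCore_iff_bead l hl0 c).mp hcore)
        set q : Fin l → ℤ := fun i => p0 (i : ℕ) with hq
        have hqp : HasParams l c (pf q) := by
          refine hasParams_congr l c p0 (pf q) (fun i hi => ?_) hp0
          simp [hpfdef, hi, hq]
        have hqsum : ∑ i, q i = 0 := by
          rw [← hsum_conv q]
          exact hasParams_sum_eq_zero l hl0 c (pf q) hqp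
        have hqT : q ∈ T := by
          rw [hTmem q]
          refine ⟨hqsum, ?_⟩
          have := hcontent c q hqp
          rw [hcc] at this
          omega
        refine ⟨q, hqT, ?_⟩
        exact (hasParams_partition_unique l hl0 (Psi q) c (pf q)
          (hPsiSpec q hqsum) hqp)
      · rintro ⟨p, hpT, rfl⟩
        obtain ⟨hp1, hp2⟩ := (hTmem p).mp hpT
        have hps := hPsiSpec p hp1
        constructor
        · exact (isLCore_iff_bead l hl0 (Psi p)).mpr
            (hasParams_bead l hl0 (Psi p) (pf p) hps)
        · have := hcontent (Psi p) p hps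
          rw [hp2] at this
          omega
    have hInj : Set.InjOn Psi T := by
      intro p hp q hq he
      have hp1 := ((hTmem p).mp hp).1
      have hq1 := ((hTmem q).mp hq).1
      have h1 := hPsiSpec p hp1
      have h2 := hPsiSpec q hq1
      rw [he] at h1
      have := hasParams_p_unique l (Psi q) (pf p) (pf q) h1 h2
      funext i
      have := this (i : ℕ) i.isLt
      rwa [hpf p i, hpf q i] at this
    have hTfin : T.Finite := by
      apply Set.Finite.subset
        (Set.Finite.pi (fun i : Fin l => Set.finite_Icc (-(N:ℤ)-1) ((N:ℤ)+1)))
      intro p hpT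
      obtain ⟨hp1, hp2⟩ := (hTmem p).mp hpT
      have hw2 : ∑ i, (p i) * (p i + (if l - r ≤ (i:ℕ) then 1 else -1)) = 2*(N:ℤ) := by
        rw [hwz p hp1]; exact hp2
      intro i _
      have hle : (p i) * (p i + (if l - r ≤ (i:ℕ) then 1 else -1)) ≤ 2*(N:ℤ) := by
        rw [← hw2]
        exact Finset.single_le_sum (fun j (_ : j ∈ Finset.univ) => (htb p j).1)
          (Finset.mem_univ i)
      have hbd := (htb p i).2.2
      have habs := abs_le.mp (show |p i| ≤ (N:ℤ)+1 by omega)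
      simp only [Set.mem_Icc]
      omega
    refine ⟨by rw [hSimg]; exact hTfin.image Psi, hTfin, ?_⟩
    rw [hSimg]
    exact Set.ncard_image_of_injOn hInj
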